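/- arXiv:2305.15949 — 5 statements merged into one kernel-verified Lean document; each statement's English description precedes it below -/
import Mathlib

section
/- Let α > 0, r > 0, c₁ > 0, c_disc > 0, M ∈ ℕ. Let g : (0,∞) → ℝ be measurable with |g(ℓ)| ≤ c₁·e^{−αℓ} for all ℓ > 0. Let L^(1),…,L^(M) be nonnegative reals satisfying sup_{ℓ > 0} |(1/M)∑_{k=1}^M 1_{ℓ ≤ L^(k)} − e^{−rℓ}| ≤ c_disc/M, and let Λ > 0 be any positive real (in the application Λ = min(L_max, max_k L^(k))). Then |∫_0^Λ e^{rℓ} · g(ℓ) · (1/M)∑_{k=1}^M 1_{[0,L^(k)]}(ℓ) dℓ − ∫_0^∞ g(ℓ) dℓ| ≤ (c₁/α)·e^{−αΛ} + (c_disc·c₁/M)·B(Λ), where B(Λ) := (e^{(r−α)Λ} − 1)/(r−α) if r ≠ α, and B(Λ) := Λ if r = α. -/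
open Set MeasureTheory

/-- bias estimate in the proof of Theorem 4.2. If `|g(ℓ)| ≤ c₁·e^(−αℓ)`
and the nonnegative levels `L⁽¹⁾, …, L⁽ᴹ⁾` satisfy the exponential tail discrepancy bound
`c_disc/M`, then for any `Λ > 0`,
`|∫_0^Λ e^(rℓ)·g(ℓ)·(1/M)∑ₖ 1_{[0,L⁽ᵏ⁾]}(ℓ) dℓ − ∫_0^∞ g(ℓ) dℓ|
  ≤ (c₁/α)·e^(−αΛ) + (c_disc·c₁/M)·B(Λ)`,
where `B(Λ) = (e^((r−α)Λ) − 1)/(r−α)` if `r ≠ α` and `B(Λ) = Λ` if `r = α`. -/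
theorem stmt_7 (α r c₁ c_disc : ℝ) (M : ℕ)
    (hα : 0 < α) (hr : 0 < r) (hc₁ : 0 < c₁) (hcd : 0 < c_disc)
    (g : ℝ → ℝ) (hg_meas : AEMeasurable g (volume.restrict (Ioi 0)))
    (hg : ∀ ℓ > (0 : ℝ), |g ℓ| ≤ c₁ * Real.exp (-α * ℓ))
    (L : Fin M → ℝ) (hL0 : ∀ k, 0 ≤ L k)
    (hdisc : ∀ ℓ > (0 : ℝ),
      |(1 / (M : ℝ)) * ∑ k, (if ℓ ≤ L k then (1 : ℝ) else 0) - Real.exp (-r * ℓ)|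
        ≤ c_disc / M)
    (Λ : ℝ) (hΛ : 0 < Λ) :
    |(∫ ℓ in (0 : ℝ)..Λ,
        Real.exp (r * ℓ) * g ℓ *
          ((1 / (M : ℝ)) * ∑ k, (if ℓ ≤ L k then (1 : ℝ) else 0)))
      - ∫ ℓ in Ioi (0 : ℝ), g ℓ|
      ≤ c₁ / α * Real.exp (-α * Λ)
        + c_disc * c₁ / M *
            (if r = α then Λ else (Real.exp ((r - α) * Λ) - 1) / (r - α)) := by

  -- M ≠ 0
  rcases Nat.eq_zero_or_pos M with hM | hM
  · exfalso
    have h := hdisc 1 one_pos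
    subst hM
    simp at h
    exact absurd h (not_le.mpr (Real.exp_pos _))
  have hMpos : (0:ℝ) < M := Nat.cast_pos.mpr hM
  set S : ℝ → ℝ := fun ℓ => (1 / (M : ℝ)) * ∑ k, (if ℓ ≤ L k then (1 : ℝ) else 0) with hSdef
  have hSmeas : Measurable S := by
    apply Measurable.const_mul
    exact Finset.measurable_sum _ fun k _ =>
      Measurable.ite (measurableSet_le measurable_id measurable_const)
        measurable_const measurable_const
  -- integrability of g
  have hexp_int : IntegrableOn (fun ℓ => c₁ * Real.exp (-α * ℓ)) (Ioi (0:ℝ)) :=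
    (exp_neg_integrableOn_Ioi 0 hα).const_mul c₁
  have hg_ae : ∀ᵐ ℓ ∂(volume.restrict (Ioi (0:ℝ))), ‖g ℓ‖ ≤ c₁ * Real.exp (-α * ℓ) := by
    filter_upwards [ae_restrict_mem measurableSet_Ioi] with ℓ hℓ
    simpa [Real.norm_eq_abs] using hg ℓ hℓ
  have hg_int : IntegrableOn g (Ioi (0:ℝ)) :=
    Integrable.mono' hexp_int hg_meas.aestronglyMeasurable hg_ae
  have hg_int_Ioc : IntegrableOn g (Ioc 0 Λ) := hg_int.mono_set Ioc_subset_Ioi_self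
  have hg_int_IoiΛ : IntegrableOn g (Ioi Λ) :=
    hg_int.mono_set (Ioi_subset_Ioi hΛ.le)
  -- D and the main integrand
  set D : ℝ → ℝ := fun ℓ => S ℓ - Real.exp (-r * ℓ) with hDdef
  have hg_meas_Ioc : AEMeasurable g (volume.restrict (Ioc 0 Λ)) :=
    hg_meas.mono_measure (Measure.restrict_mono Ioc_subset_Ioi_self le_rfl)
  set φ : ℝ → ℝ := fun ℓ => Real.exp (r * ℓ) * g ℓ * D ℓ with hφdef
  have hφmeas : AEMeasurable φ (volume.restrict (Ioc 0 Λ)) := by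
    exact ((Real.measurable_exp.comp (measurable_const.mul measurable_id)).aemeasurable.mul
      hg_meas_Ioc).mul
      ((hSmeas.sub (Real.measurable_exp.comp (measurable_const.mul measurable_id))).aemeasurable)
  have hφbound : ∀ ℓ ∈ Ioc (0:ℝ) Λ,
      ‖φ ℓ‖ ≤ c_disc * c₁ / M * Real.exp ((r - α) * ℓ) := by
    intro ℓ hℓ
    have h1 := hg ℓ hℓ.1
    have h2 := hdisc ℓ hℓ.1
    have : ‖φ ℓ‖ = Real.exp (r * ℓ) * |g ℓ| * |D ℓ| := by
      simp [hφdef, Real.norm_eq_abs, abs_mul, abs_of_pos (Real.exp_pos _)]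
    rw [this]
    have hD : |D ℓ| ≤ c_disc / M := h2
    calc Real.exp (r * ℓ) * |g ℓ| * |D ℓ|
        ≤ Real.exp (r * ℓ) * (c₁ * Real.exp (-α * ℓ)) * (c_disc / M) := by
          apply mul_le_mul
          · exact mul_le_mul_of_nonneg_left h1 (Real.exp_pos _).le
          · exact hD
          · exact abs_nonneg _
          · positivity
      _ = c_disc * c₁ / M * Real.exp ((r - α) * ℓ) := by
          rw [show (r - α) * ℓ = r * ℓ + -α * ℓ by ring, Real.exp_add]; ring
  have hbound_int : IntegrableOn (fun ℓ => c_disc * c₁ / M * Real.exp ((r - α) * ℓ))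
      (Ioc (0:ℝ) Λ) :=
    ((Real.continuous_exp.comp (continuous_const.mul continuous_id)).integrableOn_Ioc).const_mul _
  have hφ_ae : ∀ᵐ ℓ ∂(volume.restrict (Ioc (0:ℝ) Λ)),
      ‖φ ℓ‖ ≤ c_disc * c₁ / M * Real.exp ((r - α) * ℓ) := by
    filter_upwards [ae_restrict_mem measurableSet_Ioc] with ℓ hℓ using hφbound ℓ hℓ
  have hφ_int : IntegrableOn φ (Ioc (0:ℝ) Λ) :=
    Integrable.mono' hbound_int hφmeas.aestronglyMeasurable hφ_ae
  -- decomposition of the interval integral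
  have hsplit : (∫ ℓ in (0:ℝ)..Λ, Real.exp (r * ℓ) * g ℓ * S ℓ)
      = (∫ ℓ in Ioc (0:ℝ) Λ, φ ℓ) + ∫ ℓ in Ioc (0:ℝ) Λ, g ℓ := by
    rw [intervalIntegral.integral_of_le hΛ.le]
    rw [← integral_add hφ_int hg_int_Ioc]
    apply setIntegral_congr_fun measurableSet_Ioc
    intro ℓ _
    simp only [hφdef, hDdef]
    have h1 : Real.exp (r * ℓ) * Real.exp (-r * ℓ) = 1 := by
      rw [← Real.exp_add, neg_mul, add_neg_cancel, Real.exp_zero]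
    linear_combination g ℓ * h1
  -- decomposition of the tail
  have htail : (∫ ℓ in Ioi (0:ℝ), g ℓ)
      = (∫ ℓ in Ioc (0:ℝ) Λ, g ℓ) + ∫ ℓ in Ioi Λ, g ℓ := by
    rw [← setIntegral_union (Ioc_disjoint_Ioi le_rfl) measurableSet_Ioi
      hg_int_Ioc hg_int_IoiΛ, Ioc_union_Ioi_eq_Ioi hΛ.le]
  rw [hsplit, htail]
  have habs : |((∫ ℓ in Ioc (0:ℝ) Λ, φ ℓ) + ∫ ℓ in Ioc (0:ℝ) Λ, g ℓ)
      - ((∫ ℓ in Ioc (0:ℝ) Λ, g ℓ) + ∫ ℓ in Ioi Λ, g ℓ)|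
      ≤ |∫ ℓ in Ioc (0:ℝ) Λ, φ ℓ| + |∫ ℓ in Ioi Λ, g ℓ| := by
    have : ((∫ ℓ in Ioc (0:ℝ) Λ, φ ℓ) + ∫ ℓ in Ioc (0:ℝ) Λ, g ℓ)
      - ((∫ ℓ in Ioc (0:ℝ) Λ, g ℓ) + ∫ ℓ in Ioi Λ, g ℓ)
      = (∫ ℓ in Ioc (0:ℝ) Λ, φ ℓ) - ∫ ℓ in Ioi Λ, g ℓ := by ring
    rw [this]
    exact abs_sub _ _
  refine habs.trans ?_
  -- bound the two terms
  have hbd1 : |∫ ℓ in Ioc (0:ℝ) Λ, φ ℓ|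
      ≤ c_disc * c₁ / M *
          (if r = α then Λ else (Real.exp ((r - α) * Λ) - 1) / (r - α)) := by
    have := norm_integral_le_of_norm_le hbound_int hφ_ae
    rw [Real.norm_eq_abs] at this
    refine this.trans ?_
    rw [integral_const_mul]
    apply mul_le_mul_of_nonneg_left _ (by positivity)
    rw [← intervalIntegral.integral_of_le hΛ.le]
    by_cases hrα : r = α
    · simp [hrα]
    · rw [if_neg hrα]
      have hc : r - α ≠ 0 := sub_ne_zero.mpr hrα
      have D : ∀ x ∈ uIcc (0:ℝ) Λ,
          HasDerivAt (fun y => Real.exp ((r - α) * y) / (r - α))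
            (Real.exp ((r - α) * x)) x := by
        intro x _
        have h := (((Real.hasDerivAt_exp ((r - α) * x)).comp x
          ((hasDerivAt_id x).const_mul (r - α)))).div_const (r - α)
        rw [mul_one, mul_div_cancel_right₀ _ hc] at h
        exact h
      rw [intervalIntegral.integral_eq_sub_of_hasDerivAt D
        ((Real.continuous_exp.comp (continuous_const.mul continuous_id)).intervalIntegrable _ _)]
      rw [mul_zero, Real.exp_zero]
      apply le_of_eq
      ring
  have hbd2 : |∫ ℓ in Ioi Λ, g ℓ| ≤ c₁ / α * Real.exp (-α * Λ) := by
    have hg_ae' : ∀ᵐ ℓ ∂(volume.restrict (Ioi Λ)), ‖g ℓ‖ ≤ c₁ * Real.exp (-α * ℓ) := by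
      filter_upwards [ae_restrict_mem measurableSet_Ioi] with ℓ hℓ
      simpa [Real.norm_eq_abs] using hg ℓ (lt_trans hΛ hℓ)
    have hint : IntegrableOn (fun ℓ => c₁ * Real.exp (-α * ℓ)) (Ioi Λ) :=
      (exp_neg_integrableOn_Ioi Λ hα).const_mul c₁
    have := norm_integral_le_of_norm_le hint hg_ae'
    rw [Real.norm_eq_abs] at this
    refine this.trans ?_
    rw [integral_const_mul]
    have : (∫ ℓ in Ioi Λ, Real.exp (-α * ℓ)) = α⁻¹ * Real.exp (-α * Λ) := by
      have := integral_comp_mul_left_Ioi (fun x => Real.exp (-x)) Λ hα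
      simp only [smul_eq_mul, neg_mul] at this ⊢
      rw [this, integral_exp_neg_Ioi]
    rw [this]
    apply le_of_eq
    field_simp
  calc |∫ ℓ in Ioc (0:ℝ) Λ, φ ℓ| + |∫ ℓ in Ioi Λ, g ℓ|
      ≤ c_disc * c₁ / M * (if r = α then Λ else (Real.exp ((r - α) * Λ) - 1) / (r - α))
        + c₁ / α * Real.exp (-α * Λ) := add_le_add hbd1 hbd2
    _ = _ := by ring_nf
end

section
/- Let (Ω, 𝒜, ℙ) be a probability space, L_max > 0, r > 0, β > 0, c₂ > 0 and M ∈ ℕ. Let D^(1),…,D^(M) : Ω × [0, L_max] → ℝ be jointly measurable, square-integrable stochastic processes that are independent across k and identically distributed (all with the same finite-dimensional law as a process D), and suppose Var[D(ℓ)] ≤ c₂·e^{−βℓ} for all ℓ ∈ [0, L_max]. Let L^(1),…,L^(M) be (deterministic) nonnegative reals and define X^(k) := ∫_0^{L_max} e^{rℓ}·D^(k)(ℓ)·1_{[0,L^(k)]}(ℓ) dℓ. Then Var[(1/M)∑_{k=1}^M X^(k)] ≤ (c₂/M)·∫_0^{L_max}∫_0^{L_max} (1/M)∑_{k=1}^M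 1_{[0,L^(k)]}(max(ℓ,ℓ'))·e^{(r−β/2)ℓ}·e^{(r−β/2)ℓ'} dℓ dℓ'. -/
open Set MeasureTheory ProbabilityTheory

section Aux

variable {α : Type*} [MeasurableSpace α] {μ : Measure α}

lemma my_integrable_mul {f g : α → ℝ} (hf : MemLp f 2 μ) (hg : MemLp g 2 μ) :
    Integrable (fun x => f x * g x) μ := by
  have h1 : Integrable (fun x => f x ^ 2) μ := hf.integrable_sq
  have h2 : Integrable (fun x => g x ^ 2) μ := hg.integrable_sq
  refine Integrable.mono' ((h1.add h2).div_const 2)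
    (hf.1.mul hg.1) (Filter.Eventually.of_forall fun x => ?_)
  simp only [Pi.add_apply, Real.norm_eq_abs, abs_mul]
  nlinarith [sq_nonneg (|f x| - |g x|), sq_abs (f x), sq_abs (g x), abs_nonneg (f x),
    abs_nonneg (g x)]

lemma my_cs {f g : α → ℝ} (hf : MemLp f 2 μ) (hg : MemLp g 2 μ) :
    ∫ x, f x * g x ∂μ ≤ Real.sqrt (∫ x, f x ^ 2 ∂μ) * Real.sqrt (∫ x, g x ^ 2 ∂μ) := by
  have habs : ∫ x, f x * g x ∂μ ≤ ∫ x, |f x| * |g x| ∂μ := by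
    refine integral_mono (my_integrable_mul hf hg) ?_ (fun x => ?_)
    · simpa [abs_mul] using (my_integrable_mul hf hg).abs
    · rw [← abs_mul]; exact le_abs_self _
  refine habs.trans ?_
  have h2 : (ENNReal.ofReal (2:ℝ)) = 2 := by norm_num
  have hconj : Real.HolderConjugate 2 2 := Real.HolderConjugate.two_two
  have key := integral_mul_le_Lp_mul_Lq_of_nonneg (μ := μ) hconj
    (f := fun x => |f x|) (g := fun x => |g x|)
    (Filter.Eventually.of_forall fun x => abs_nonneg _)
    (Filter.Eventually.of_forall fun x => abs_nonneg _)
    (h2 ▸ hf.abs) (h2 ▸ hg.abs)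
  have e1 : ∀ h : α → ℝ, ∫ x, |h x| ^ (2:ℝ) ∂μ = ∫ x, h x ^ 2 ∂μ := fun h =>
    integral_congr_ae (Filter.Eventually.of_forall fun x => by
      show |h x| ^ (2:ℝ) = h x ^ 2
      rw [Real.rpow_two, sq_abs])
  rw [e1 f, e1 g] at key
  refine key.trans (le_of_eq ?_)
  rw [Real.sqrt_eq_rpow, Real.sqrt_eq_rpow]

lemma my_sq_int_le [IsFiniteMeasure μ] {f : α → ℝ} (hf : MemLp f 2 μ) :
    (∫ x, f x ∂μ) ^ 2 ≤ (μ univ).toReal * ∫ x, f x ^ 2 ∂μ := by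
  have h1 : |∫ x, f x ∂μ| ≤ ∫ x, |f x| ∂μ := by
    simpa [Real.norm_eq_abs] using norm_integral_le_integral_norm f (μ := μ)
  have h2 : ∫ x, |f x| ∂μ ≤ Real.sqrt (∫ x, |f x| ^ 2 ∂μ) * Real.sqrt (∫ x, (1:ℝ) ^ 2 ∂μ) := by
    simpa using my_cs hf.abs (memLp_const (1:ℝ))
  have h3 : (∫ x, f x ∂μ) ^ 2 ≤ (∫ x, |f x| ∂μ) ^ 2 := by
    rw [← sq_abs (∫ x, f x ∂μ)]
    exact pow_le_pow_left₀ (abs_nonneg _) h1 2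
  have h4 : (∫ x, |f x| ∂μ) ^ 2
      ≤ (Real.sqrt (∫ x, |f x| ^ 2 ∂μ) * Real.sqrt (∫ x, (1:ℝ) ^ 2 ∂μ)) ^ 2 :=
    pow_le_pow_left₀ (integral_nonneg fun x => abs_nonneg _) h2 2
  refine h3.trans (h4.trans (le_of_eq ?_))
  have ha : (0:ℝ) ≤ ∫ x, |f x| ^ 2 ∂μ := integral_nonneg fun x => by positivity
  have hb : (0:ℝ) ≤ ∫ x, (1:ℝ) ^ 2 ∂μ := integral_nonneg fun x => by positivity
  rw [mul_pow, Real.sq_sqrt ha, Real.sq_sqrt hb]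
  have : ∫ x, |f x| ^ 2 ∂μ = ∫ x, f x ^ 2 ∂μ := by simp [sq_abs]
  rw [this]
  simp [integral_const]
  rw [mul_comm]; rfl

lemma my_variance_comp {Ω β : Type*} [MeasurableSpace Ω] [MeasurableSpace β]
    (P : Measure Ω) (Φ : Ω → β) (hΦ : AEMeasurable Φ P) {ψ : β → ℝ} (hψ : Measurable ψ) :
    variance (fun ω => ψ (Φ ω)) P = variance ψ (Measure.map Φ P) := by
  have hm : (Measure.map Φ P)[ψ] = ∫ ω, ψ (Φ ω) ∂P :=
    integral_map hΦ hψ.aestronglyMeasurable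
  rw [variance, variance, evariance, evariance, hm,
    lintegral_map' (by fun_prop) hΦ]

theorem MeasureTheory.MemLp.variance_eq {Ω : Type*} [MeasurableSpace Ω] {μ : Measure Ω}
    [IsFiniteMeasure μ] {X : Ω → ℝ} (hX : MemLp X 2 μ) :
    variance X μ = μ[(X - fun _ => μ[X] :) ^ 2] := by
  rw [variance_eq_integral hX.aestronglyMeasurable.aemeasurable]; rfl

variable {Ω : Type*} [MeasurableSpace Ω] {P : Measure Ω} [IsProbabilityMeasure P]
  [IsFiniteMeasure μ]

lemma my_slice_omega {H : Ω → α → ℝ} (hm : Measurable (Function.uncurry H))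
    (hH : MemLp (fun p : Ω × α => H p.1 p.2) 2 (P.prod μ)) :
    ∀ᵐ ω ∂P, MemLp (H ω) 2 μ := by
  have hsq : Integrable (fun p : Ω × α => H p.1 p.2 ^ 2) (P.prod μ) := hH.integrable_sq
  filter_upwards [hsq.prod_right_ae] with ω hω
  exact (memLp_two_iff_integrable_sq
    (hm.comp measurable_prodMk_left).aestronglyMeasurable).mpr hω

lemma my_slice_ell {H : Ω → α → ℝ} (hm : Measurable (Function.uncurry H))
    (hH : MemLp (fun p : Ω × α => H p.1 p.2) 2 (P.prod μ)) :
    ∀ᵐ ℓ ∂μ, MemLp (fun ω => H ω ℓ) 2 P := by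
  have hsq : Integrable (fun p : Ω × α => H p.1 p.2 ^ 2) (P.prod μ) := hH.integrable_sq
  filter_upwards [hsq.prod_left_ae] with ℓ hℓ
  exact (memLp_two_iff_integrable_sq
    (hm.comp measurable_prodMk_right).aestronglyMeasurable).mpr hℓ

lemma my_K_integrable {H : Ω → α → ℝ} (hm : Measurable (Function.uncurry H))
    (hH : MemLp (fun p : Ω × α => H p.1 p.2) 2 (P.prod μ)) :
    Integrable (fun z : Ω × (α × α) => H z.1 z.2.1 * H z.1 z.2.2) (P.prod (μ.prod μ)) := by
  have hKm : Measurable (fun z : Ω × (α × α) => H z.1 z.2.1 * H z.1 z.2.2) := by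
    apply Measurable.mul
    · exact hm.comp (measurable_fst.prodMk (measurable_fst.comp measurable_snd))
    · exact hm.comp (measurable_fst.prodMk (measurable_snd.comp measurable_snd))
  rw [integrable_prod_iff hKm.aestronglyMeasurable]
  have hsqint : Integrable (fun ω => ∫ ℓ, H ω ℓ ^ 2 ∂μ) P :=
    (hH.integrable_sq).integral_prod_left
  constructor
  · filter_upwards [my_slice_omega hm hH] with ω hω
    exact (hω.integrable one_le_two).mul_prod (hω.integrable one_le_two)
  · refine Integrable.mono' (hsqint.const_mul ((μ univ).toReal)) ?_ ?_
    · exact (hKm.norm.stronglyMeasurable.integral_prod_right').aestronglyMeasurable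
    · filter_upwards [my_slice_omega hm hH] with ω hω
      have habs : ∫ q : α × α, ‖H ω q.1 * H ω q.2‖ ∂(μ.prod μ)
          = (∫ ℓ, |H ω ℓ| ∂μ) * (∫ ℓ, |H ω ℓ| ∂μ) := by
        rw [← integral_prod_mul (fun ℓ => |H ω ℓ|) (fun ℓ => |H ω ℓ|)]
        simp [abs_mul]
      have hnn : (0:ℝ) ≤ ∫ q : α × α, ‖H ω q.1 * H ω q.2‖ ∂(μ.prod μ) :=
        integral_nonneg fun q => norm_nonneg _
      rw [Real.norm_of_nonneg hnn, habs, ← sq]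
      have := my_sq_int_le (μ := μ) hω.abs
      simpa [sq_abs] using this

end Aux

/-- first variance estimate in the proof of Theorem 4.2. Let
`D⁽¹⁾, …, D⁽ᴹ⁾ : Ω × [0, L_max] → ℝ` be jointly measurable, square-integrable processes,
independent across `k` and identically distributed (with the same law as a process `D₀`),
with `Var[D₀(ℓ)] ≤ c₂·e^(−βℓ)`. For deterministic nonnegative levels `L⁽¹⁾, …, L⁽ᴹ⁾` and
`X⁽ᵏ⁾ := ∫_0^{L_max} e^(rℓ)·D⁽ᵏ⁾(ℓ)·1_{[0,L⁽ᵏ⁾]}(ℓ) dℓ` we have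
`Var[(1/M)∑ₖ X⁽ᵏ⁾]
  ≤ (c₂/M)·∫_0^{L_max}∫_0^{L_max} (1/M)∑ₖ 1_{[0,L⁽ᵏ⁾]}(max(ℓ,ℓ'))·e^((r−β/2)ℓ)·e^((r−β/2)ℓ') dℓ dℓ'`. -/
theorem stmt_8 {Ω : Type*} [MeasurableSpace Ω] (P : Measure Ω) [IsProbabilityMeasure P]
    (Lmax r β c₂ : ℝ) (M : ℕ)
    (hLmax : 0 < Lmax) (hr : 0 < r) (hβ : 0 < β) (hc₂ : 0 < c₂)
    (D : Fin M → Ω → ℝ → ℝ) (D₀ : Ω → ℝ → ℝ)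
    (hD_meas : ∀ k, Measurable (Function.uncurry (D k)))
    (hD₀_meas : Measurable (Function.uncurry D₀))
    (hD_L2 : ∀ k, MemLp (fun p : Ω × ℝ => D k p.1 p.2) 2
      (P.prod (volume.restrict (Icc 0 Lmax))))
    (hD_indep : iIndepFun (fun k ω => D k ω) P)
    (hD_ident : ∀ k, Measure.map (fun ω => D k ω) P = Measure.map (fun ω => D₀ ω) P)
    (hvar : ∀ ℓ ∈ Icc (0 : ℝ) Lmax,
      variance (fun ω => D₀ ω ℓ) P ≤ c₂ * Real.exp (-β * ℓ))
    (L : Fin M → ℝ) (hL0 : ∀ k, 0 ≤ L k) :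
    variance (fun ω => (1 / (M : ℝ)) *
        ∑ k, ∫ ℓ in (0 : ℝ)..Lmax,
          Real.exp (r * ℓ) * D k ω ℓ * (if ℓ ≤ L k then (1 : ℝ) else 0)) P
      ≤ c₂ / M *
          ∫ ℓ in (0 : ℝ)..Lmax, ∫ ℓ' in (0 : ℝ)..Lmax,
            ((1 / (M : ℝ)) * ∑ k, (if max ℓ ℓ' ≤ L k then (1 : ℝ) else 0))
              * Real.exp ((r - β / 2) * ℓ) * Real.exp ((r - β / 2) * ℓ') := by
  classical
  set ν : Measure ℝ := volume.restrict (Ioc (0:ℝ) Lmax) with hν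
  haveI hνfin : IsFiniteMeasure ν := by
    constructor
    rw [hν, Measure.restrict_apply_univ, Real.volume_Ioc]
    exact ENNReal.ofReal_lt_top
  -- the elementary integrand
  set f : Fin M → Ω → ℝ → ℝ :=
    fun k ω ℓ => Real.exp (r * ℓ) * D k ω ℓ * (if ℓ ≤ L k then (1:ℝ) else 0) with hf
  have hfm : ∀ k, Measurable (Function.uncurry (f k)) := by
    intro k
    apply Measurable.mul
    · exact (Real.measurable_exp.comp (measurable_snd.const_mul r)).mul (hD_meas k)
    · exact (Measurable.ite (measurableSet_le measurable_id measurable_const)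
        measurable_const measurable_const).comp measurable_snd
  -- membership in L² over the product
  have hfL2 : ∀ k, MemLp (fun p : Ω × ℝ => f k p.1 p.2) 2 (P.prod ν) := by
    intro k
    have hDk : MemLp (fun p : Ω × ℝ => D k p.1 p.2) 2 (P.prod ν) := by
      have h1 : P.prod ν = (P.prod (volume.restrict (Icc 0 Lmax))).restrict (univ ×ˢ Ioc 0 Lmax) := by
        rw [← Measure.prod_restrict, Measure.restrict_univ, hν,
          Measure.restrict_restrict measurableSet_Ioc,
          inter_eq_left.mpr Ioc_subset_Icc_self]
      rw [h1]
      exact (hD_L2 k).restrict _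
    have hφ : MemLp (fun p : Ω × ℝ => Real.exp (r * p.2) * (if p.2 ≤ L k then (1:ℝ) else 0))
        ⊤ (P.prod ν) := by
      refine memLp_top_of_bound ?_ (Real.exp (r * Lmax)) ?_
      · refine Measurable.aestronglyMeasurable ?_
        exact (Real.measurable_exp.comp (measurable_snd.const_mul r)).mul
          ((Measurable.ite (measurableSet_le measurable_id measurable_const)
            measurable_const measurable_const).comp measurable_snd)
      · have hae : ∀ᵐ p : Ω × ℝ ∂(P.prod ν), p.2 ∈ Ioc (0:ℝ) Lmax :=
          Measure.quasiMeasurePreserving_snd.ae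
            (ae_restrict_mem measurableSet_Ioc)
        filter_upwards [hae] with p hp
        have h1 : Real.exp (r * p.2) ≤ Real.exp (r * Lmax) :=
          Real.exp_le_exp.mpr (mul_le_mul_of_nonneg_left hp.2 hr.le)
        have h2 : |(if p.2 ≤ L k then (1:ℝ) else 0)| ≤ 1 := by split_ifs <;> simp
        rw [Real.norm_eq_abs, abs_mul, abs_of_pos (Real.exp_pos _)]
        calc Real.exp (r * p.2) * |(if p.2 ≤ L k then (1:ℝ) else 0)|
            ≤ Real.exp (r * p.2) * 1 :=
              mul_le_mul_of_nonneg_left h2 (Real.exp_pos _).le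
          _ ≤ Real.exp (r * Lmax) := by rwa [mul_one]
    have heq : (fun p : Ω × ℝ => f k p.1 p.2)
        = (fun p : Ω × ℝ => Real.exp (r * p.2) * (if p.2 ≤ L k then (1:ℝ) else 0))
          • (fun p : Ω × ℝ => D k p.1 p.2) := by
      funext p
      simp only [hf, Pi.smul_apply, Pi.mul_apply, smul_eq_mul]
      ring
    rw [heq]
    exact MemLp.smul (r := 2) hDk hφ
  have hfInt : ∀ k, Integrable (fun p : Ω × ℝ => f k p.1 p.2) (P.prod ν) :=
    fun k => (hfL2 k).integrable one_le_two
  set m : Fin M → ℝ → ℝ := fun k ℓ => ∫ ω, f k ω ℓ ∂P with hm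
  have hmm : ∀ k, Measurable (m k) := fun k =>
    ((hfm k).stronglyMeasurable.integral_prod_left').measurable
  have hmL2 : ∀ k, MemLp (m k) 2 ν := by
    intro k
    have hdom : Integrable (fun ℓ => ∫ ω, f k ω ℓ ^ 2 ∂P) ν :=
      ((hfL2 k).integrable_sq).integral_prod_right
    refine (memLp_two_iff_integrable_sq (hmm k).aestronglyMeasurable).mpr ?_
    refine Integrable.mono' hdom ((hmm k).pow_const 2).aestronglyMeasurable ?_
    filter_upwards [my_slice_ell (hfm k) (hfL2 k)] with ℓ hℓ
    have h := my_sq_int_le (μ := P) hℓ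
    rw [Real.norm_eq_abs, abs_of_nonneg (sq_nonneg _)]
    simpa using h
  have hmInt : ∀ k, Integrable (m k) ν := fun k => (hmL2 k).integrable one_le_two
  set H : Ω → ℝ → ℝ := fun ω ℓ => ∑ k, (f k ω ℓ - m k ℓ) with hHdef
  have hHm : Measurable (Function.uncurry H) := by
    apply Finset.measurable_sum
    intro k _
    exact (hfm k).sub ((hmm k).comp measurable_snd)
  have hsnd : Measure.map Prod.snd (P.prod ν) = ν := by
    rw [Measure.map_snd_prod, measure_univ, one_smul]
  have hHL2 : MemLp (fun p : Ω × ℝ => H p.1 p.2) 2 (P.prod ν) := by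
    have : ∀ k : Fin M, MemLp (fun p : Ω × ℝ => f k p.1 p.2 - m k p.2) 2 (P.prod ν) := by
      intro k
      refine (hfL2 k).sub ?_
      have h2 := (hmL2 k)
      rw [← hsnd] at h2
      exact h2.comp_of_map measurable_snd.aemeasurable
    exact memLp_finset_sum _ (fun k _ => this k)
  set X : Fin M → Ω → ℝ := fun k ω => ∫ ℓ, f k ω ℓ ∂ν with hX
  set E : Fin M → ℝ := fun k => ∫ ℓ, m k ℓ ∂ν with hE
  set S : Ω → ℝ := fun ω => ∑ k, X k ω with hS
  have hXL2 : ∀ k, MemLp (X k) 2 P := by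
    intro k
    have hXm : StronglyMeasurable (X k) := (hfm k).stronglyMeasurable.integral_prod_right'
    refine (memLp_two_iff_integrable_sq hXm.aestronglyMeasurable).mpr ?_
    have hdom : Integrable (fun ω => (ν univ).toReal * ∫ ℓ, f k ω ℓ ^ 2 ∂ν) P :=
      (((hfL2 k).integrable_sq).integral_prod_left).const_mul _
    refine Integrable.mono' hdom ((hXm.measurable.pow_const 2).aestronglyMeasurable) ?_
    filter_upwards [my_slice_omega (hfm k) (hfL2 k)] with ω hω
    rw [Real.norm_eq_abs, abs_of_nonneg (sq_nonneg _)]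
    exact my_sq_int_le hω
  have hSL2 : MemLp S 2 P := memLp_finset_sum _ (fun k _ => hXL2 k)
  have hES : ∫ ω, S ω ∂P = ∑ k, E k := by
    rw [hS]
    rw [integral_finset_sum _ (fun k _ => (hXL2 k).integrable one_le_two)]
    refine Finset.sum_congr rfl (fun k _ => ?_)
    exact integral_integral_swap (hfInt k)
  have hvar_eq : variance S P = ∫ ω, (S ω - ∑ k, E k) ^ 2 ∂P := by
    rw [hSL2.variance_eq, hES]
    refine integral_congr_ae (Filter.Eventually.of_forall fun ω => ?_)
    simp [Pi.pow_apply, Pi.sub_apply]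
  -- step 5: identify with the centered integral
  have hstep5 : ∀ᵐ ω ∂P, S ω - ∑ k, E k = ∫ ℓ, H ω ℓ ∂ν := by
    have hae : ∀ᵐ ω ∂P, ∀ k : Fin M, Integrable (fun ℓ => f k ω ℓ) ν := by
      rw [MeasureTheory.ae_all_iff]
      exact fun k => (hfInt k).prod_right_ae
    filter_upwards [hae] with ω hω
    rw [hHdef]
    rw [integral_finset_sum (f := fun k ℓ => f k ω ℓ - m k ℓ) Finset.univ
      (fun k _ => (hω k).sub (hmInt k))]
    rw [hS, ← Finset.sum_sub_distrib]
    refine Finset.sum_congr rfl (fun k _ => ?_)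
    rw [integral_sub (hω k) (hmInt k)]
  have hvar_eq2 : variance S P = ∫ ω, ∫ q, H ω q.1 * H ω q.2 ∂(ν.prod ν) ∂P := by
    rw [hvar_eq]
    refine integral_congr_ae ?_
    filter_upwards [hstep5] with ω hω
    rw [hω, sq, ← integral_prod_mul (fun ℓ => H ω ℓ) (fun ℓ => H ω ℓ)]
  have hK : Integrable (fun z : Ω × (ℝ × ℝ) => H z.1 z.2.1 * H z.1 z.2.2) (P.prod (ν.prod ν)) :=
    my_K_integrable hHm hHL2
  have hswap : ∫ ω, ∫ q, H ω q.1 * H ω q.2 ∂(ν.prod ν) ∂P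
      = ∫ q, ∫ ω, H ω q.1 * H ω q.2 ∂P ∂(ν.prod ν) :=
    integral_integral_swap hK
  -- the bounding integrand
  set e : ℝ → ℝ := fun ℓ => Real.exp ((r - β / 2) * ℓ) with he
  set B0 : ℝ × ℝ → ℝ :=
    fun q => ∑ k, (if max q.1 q.2 ≤ L k then (1:ℝ) else 0) * e q.1 * e q.2 with hB0
  have heB : ∀ ℓ ∈ Ioc (0:ℝ) Lmax, e ℓ ≤ Real.exp (|r - β / 2| * Lmax) := by
    intro ℓ hℓ
    rw [he]
    refine Real.exp_le_exp.mpr ?_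
    calc (r - β / 2) * ℓ ≤ |r - β / 2| * ℓ :=
          mul_le_mul_of_nonneg_right (le_abs_self _) hℓ.1.le
      _ ≤ |r - β / 2| * Lmax := mul_le_mul_of_nonneg_left hℓ.2 (abs_nonneg _)
  have hB0m : Measurable B0 := by
    apply Finset.measurable_sum
    intro k _
    refine Measurable.mul (Measurable.mul ?_ ?_) ?_
    · exact Measurable.ite
        (measurableSet_le (measurable_fst.max measurable_snd) measurable_const)
        measurable_const measurable_const
    · exact Real.measurable_exp.comp (measurable_fst.const_mul _)
    · exact Real.measurable_exp.comp (measurable_snd.const_mul _)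
  have haefst : ∀ᵐ q : ℝ × ℝ ∂(ν.prod ν), q.1 ∈ Ioc (0:ℝ) Lmax :=
    Measure.quasiMeasurePreserving_fst.ae (ae_restrict_mem measurableSet_Ioc)
  have haesnd : ∀ᵐ q : ℝ × ℝ ∂(ν.prod ν), q.2 ∈ Ioc (0:ℝ) Lmax :=
    Measure.quasiMeasurePreserving_snd.ae (ae_restrict_mem measurableSet_Ioc)
  have hB0int : Integrable B0 (ν.prod ν) := by
    refine Integrable.mono' (integrable_const
      ((M : ℝ) * (Real.exp (|r - β / 2| * Lmax) * Real.exp (|r - β / 2| * Lmax)))) 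
      hB0m.aestronglyMeasurable ?_
    filter_upwards [haefst, haesnd] with q hq1 hq2
    rw [Real.norm_eq_abs]
    refine (Finset.abs_sum_le_sum_abs _ _).trans ?_
    have hterm : ∀ k : Fin M, |(if max q.1 q.2 ≤ L k then (1:ℝ) else 0) * e q.1 * e q.2|
        ≤ Real.exp (|r - β / 2| * Lmax) * Real.exp (|r - β / 2| * Lmax) := by
      intro k
      rw [abs_mul, abs_mul]
      have h1 : |(if max q.1 q.2 ≤ L k then (1:ℝ) else 0)| ≤ 1 := by split_ifs <;> simp
      have h2 : |e q.1| ≤ Real.exp (|r - β / 2| * Lmax) := by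
        rw [abs_of_pos (Real.exp_pos _)]; exact heB _ hq1
      have h3 : |e q.2| ≤ Real.exp (|r - β / 2| * Lmax) := by
        rw [abs_of_pos (Real.exp_pos _)]; exact heB _ hq2
      calc |(if max q.1 q.2 ≤ L k then (1:ℝ) else 0)| * |e q.1| * |e q.2|
          ≤ 1 * Real.exp (|r - β / 2| * Lmax) * Real.exp (|r - β / 2| * Lmax) :=
            mul_le_mul (mul_le_mul h1 h2 (abs_nonneg _) zero_le_one) h3 (abs_nonneg _)
              (by positivity)
        _ = Real.exp (|r - β / 2| * Lmax) * Real.exp (|r - β / 2| * Lmax) := by ring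
    calc ∑ k, |(if max q.1 q.2 ≤ L k then (1:ℝ) else 0) * e q.1 * e q.2|
        ≤ ∑ _k : Fin M, Real.exp (|r - β / 2| * Lmax) * Real.exp (|r - β / 2| * Lmax) :=
          Finset.sum_le_sum (fun k _ => hterm k)
      _ = (M : ℝ) * (Real.exp (|r - β / 2| * Lmax) * Real.exp (|r - β / 2| * Lmax)) := by
          simp [Finset.sum_const, nsmul_eq_mul]
  -- the diagonal variance bound
  have hdiag : ∀ (j : Fin M) (ℓ : ℝ), ℓ ∈ Ioc (0:ℝ) Lmax →
      MemLp (fun ω => f j ω ℓ) 2 P →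
      ∫ ω, (f j ω ℓ - m j ℓ) ^ 2 ∂P
        ≤ c₂ * ((if ℓ ≤ L j then (1:ℝ) else 0) * e ℓ) ^ 2 := by
    intro j ℓ hℓ hsl
    have hveq : ∫ ω, (f j ω ℓ - m j ℓ) ^ 2 ∂P = variance (fun ω => f j ω ℓ) P := by
      rw [hsl.variance_eq]
      refine integral_congr_ae (Filter.Eventually.of_forall fun ω => ?_)
      simp only [Pi.pow_apply, Pi.sub_apply]
      rfl
    rw [hveq]
    have hfactor : (fun ω => f j ω ℓ)
        = fun ω => (Real.exp (r * ℓ) * (if ℓ ≤ L j then (1:ℝ) else 0)) * D j ω ℓ := by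
      funext ω; rw [hf]; ring
    rw [hfactor, variance_const_mul]
    have hΦj : Measurable (fun ω => D j ω) :=
      measurable_pi_lambda _ (fun t => (hD_meas j).comp (measurable_id.prodMk measurable_const))
    have hΦ0 : Measurable (fun ω => D₀ ω) :=
      measurable_pi_lambda _ (fun t => hD₀_meas.comp (measurable_id.prodMk measurable_const))
    have hident : variance (fun ω => D j ω ℓ) P = variance (fun ω => D₀ ω ℓ) P := by
      have h1 := my_variance_comp P (fun ω => D j ω) hΦj.aemeasurable
        (ψ := fun u : ℝ → ℝ => u ℓ) (measurable_pi_apply ℓ)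
      have h2 := my_variance_comp P (fun ω => D₀ ω) hΦ0.aemeasurable
        (ψ := fun u : ℝ → ℝ => u ℓ) (measurable_pi_apply ℓ)
      rw [h1, h2, hD_ident j]
    rw [hident]
    have hbd := hvar ℓ ⟨hℓ.1.le, hℓ.2⟩
    have e2 : ∀ x : ℝ, (Real.exp x) ^ 2 = Real.exp (2 * x) := fun x => by
      rw [sq, ← Real.exp_add, two_mul]
    calc (Real.exp (r * ℓ) * (if ℓ ≤ L j then (1:ℝ) else 0)) ^ 2
          * variance (fun ω => D₀ ω ℓ) P
        ≤ (Real.exp (r * ℓ) * (if ℓ ≤ L j then (1:ℝ) else 0)) ^ 2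
          * (c₂ * Real.exp (-β * ℓ)) := by
          refine mul_le_mul_of_nonneg_left hbd (sq_nonneg _)
      _ = c₂ * ((if ℓ ≤ L j then (1:ℝ) else 0) * e ℓ) ^ 2 := by
          rw [he]
          split_ifs with hifj
          · rw [mul_one, one_mul, e2, e2]
            rw [show Real.exp (2 * (r * ℓ)) * (c₂ * Real.exp (-β * ℓ))
                = c₂ * (Real.exp (2 * (r * ℓ)) * Real.exp (-β * ℓ)) from by ring,
              ← Real.exp_add]
            congr 2
            ring
          · ring
  -- the pointwise (a.e.) covariance bound
  have hgood : ∀ᵐ ℓ ∂ν, ℓ ∈ Ioc (0:ℝ) Lmax ∧ ∀ k : Fin M, MemLp (fun ω => f k ω ℓ) 2 P :=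
    (ae_restrict_mem measurableSet_Ioc).and
      (MeasureTheory.ae_all_iff.mpr fun k => my_slice_ell (hfm k) (hfL2 k))
  have hpt : ∀ᵐ q : ℝ × ℝ ∂(ν.prod ν), (∫ ω, H ω q.1 * H ω q.2 ∂P) ≤ c₂ * B0 q := by
    filter_upwards [Measure.quasiMeasurePreserving_fst.ae hgood,
      Measure.quasiMeasurePreserving_snd.ae hgood] with q hq1 hq2
    obtain ⟨hℓ, hsl⟩ := hq1
    obtain ⟨hℓ', hsl'⟩ := hq2
    have hexp : ∀ ω, H ω q.1 * H ω q.2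
        = ∑ j, ∑ k, (f j ω q.1 - m j q.1) * (f k ω q.2 - m k q.2) := by
      intro ω; rw [hHdef, Finset.sum_mul_sum]
    have hc : ∀ (k : Fin M) (ℓ : ℝ), MemLp (fun ω => f k ω ℓ) 2 P →
        MemLp (fun ω => f k ω ℓ - m k ℓ) 2 P := fun k ℓ h => h.sub (memLp_const _)
    have hint : ∀ j k : Fin M, Integrable
        (fun ω => (f j ω q.1 - m j q.1) * (f k ω q.2 - m k q.2)) P :=
      fun j k => my_integrable_mul (hc j _ (hsl j)) (hc k _ (hsl' k))
    have h1 : ∫ ω, H ω q.1 * H ω q.2 ∂P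
        = ∑ j, ∑ k, ∫ ω, (f j ω q.1 - m j q.1) * (f k ω q.2 - m k q.2) ∂P := by
      rw [integral_congr_ae (Filter.Eventually.of_forall hexp),
        integral_finset_sum _ (fun j _ => integrable_finset_sum _ (fun k _ => hint j k))]
      exact Finset.sum_congr rfl fun j _ => integral_finset_sum _ (fun k _ => hint j k)
    rw [h1]
    have hzero : ∀ (k : Fin M) (ℓ : ℝ), MemLp (fun ω => f k ω ℓ) 2 P →
        ∫ ω, (f k ω ℓ - m k ℓ) ∂P = 0 := by
      intro k ℓ h
      rw [integral_sub (h.integrable one_le_two) (integrable_const _)]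
      simp [hm]
    have hoff : ∀ j k : Fin M, j ≠ k →
        ∫ ω, (f j ω q.1 - m j q.1) * (f k ω q.2 - m k q.2) ∂P = 0 := by
      intro j k hjk
      have h0 : IndepFun (fun ω => D j ω) (fun ω => D k ω) P := hD_indep.indepFun hjk
      have hφ : Measurable (fun u : ℝ → ℝ =>
          Real.exp (r * q.1) * u q.1 * (if q.1 ≤ L j then (1:ℝ) else 0) - m j q.1) :=
        (((measurable_pi_apply q.1).const_mul _).mul_const _).sub_const _
      have hψ : Measurable (fun u : ℝ → ℝ =>
          Real.exp (r * q.2) * u q.2 * (if q.2 ≤ L k then (1:ℝ) else 0) - m k q.2) :=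
        (((measurable_pi_apply q.2).const_mul _).mul_const _).sub_const _
      have hind : IndepFun (fun ω => f j ω q.1 - m j q.1)
          (fun ω => f k ω q.2 - m k q.2) P := h0.comp hφ hψ
      rw [hind.integral_fun_mul_eq_mul_integral ((hc j _ (hsl j)).aestronglyMeasurable)
        ((hc k _ (hsl' k)).aestronglyMeasurable), hzero j _ (hsl j), zero_mul]
    have hdiagle : ∀ j : Fin M,
        ∫ ω, (f j ω q.1 - m j q.1) * (f j ω q.2 - m j q.2) ∂P
          ≤ c₂ * ((if max q.1 q.2 ≤ L j then (1:ℝ) else 0) * e q.1 * e q.2) := by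
      intro j
      have hcs := my_cs (hc j _ (hsl j)) (hc j _ (hsl' j))
      have hb1 := hdiag j q.1 hℓ (hsl j)
      have hb2 := hdiag j q.2 hℓ' (hsl' j)
      set A1 : ℝ := (if q.1 ≤ L j then (1:ℝ) else 0) * e q.1 with hA1
      set A2 : ℝ := (if q.2 ≤ L j then (1:ℝ) else 0) * e q.2 with hA2
      have hA1nn : 0 ≤ A1 :=
        mul_nonneg (by split_ifs <;> norm_num) (by rw [he]; positivity)
      have hA2nn : 0 ≤ A2 :=
        mul_nonneg (by split_ifs <;> norm_num) (by rw [he]; positivity)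
      have hs1 : Real.sqrt (∫ ω, (f j ω q.1 - m j q.1) ^ 2 ∂P) ≤ Real.sqrt c₂ * A1 := by
        refine (Real.sqrt_le_sqrt hb1).trans (le_of_eq ?_)
        rw [Real.sqrt_mul hc₂.le, Real.sqrt_sq hA1nn]
      have hs2 : Real.sqrt (∫ ω, (f j ω q.2 - m j q.2) ^ 2 ∂P) ≤ Real.sqrt c₂ * A2 := by
        refine (Real.sqrt_le_sqrt hb2).trans (le_of_eq ?_)
        rw [Real.sqrt_mul hc₂.le, Real.sqrt_sq hA2nn]
      calc ∫ ω, (f j ω q.1 - m j q.1) * (f j ω q.2 - m j q.2) ∂P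
          ≤ Real.sqrt (∫ ω, (f j ω q.1 - m j q.1) ^ 2 ∂P)
            * Real.sqrt (∫ ω, (f j ω q.2 - m j q.2) ^ 2 ∂P) := hcs
        _ ≤ (Real.sqrt c₂ * A1) * (Real.sqrt c₂ * A2) :=
            mul_le_mul hs1 hs2 (Real.sqrt_nonneg _)
              (mul_nonneg (Real.sqrt_nonneg _) hA1nn)
        _ = (Real.sqrt c₂ * Real.sqrt c₂) * (A1 * A2) := by ring
        _ = c₂ * (A1 * A2) := by rw [Real.mul_self_sqrt hc₂.le]
        _ = c₂ * ((if max q.1 q.2 ≤ L j then (1:ℝ) else 0) * e q.1 * e q.2) := by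
            rw [hA1, hA2]
            by_cases hj1 : q.1 ≤ L j <;> by_cases hj2 : q.2 ≤ L j <;>
              simp [hj1, hj2, max_le_iff]
    calc ∑ j, ∑ k, ∫ ω, (f j ω q.1 - m j q.1) * (f k ω q.2 - m k q.2) ∂P
        = ∑ j, ∫ ω, (f j ω q.1 - m j q.1) * (f j ω q.2 - m j q.2) ∂P :=
          Finset.sum_congr rfl fun j _ => Finset.sum_eq_single_of_mem j (Finset.mem_univ j)
            (fun k _ hkj => hoff j k (Ne.symm hkj))
      _ ≤ ∑ j, c₂ * ((if max q.1 q.2 ≤ L j then (1:ℝ) else 0) * e q.1 * e q.2) :=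
          Finset.sum_le_sum fun j _ => hdiagle j
      _ = c₂ * B0 q := by rw [hB0, Finset.mul_sum]
  -- combine variance bound
  have hVarS : variance S P ≤ c₂ * ∫ q, B0 q ∂(ν.prod ν) := by
    rw [hvar_eq2, hswap]
    calc ∫ q, ∫ ω, H ω q.1 * H ω q.2 ∂P ∂(ν.prod ν)
        ≤ ∫ q, c₂ * B0 q ∂(ν.prod ν) :=
          integral_mono_ae hK.integral_prod_right (hB0int.const_mul c₂) hpt
      _ = c₂ * ∫ q, B0 q ∂(ν.prod ν) := integral_const_mul _ _
  -- rewrite the target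
  have hfun : (fun ω => (1 / (M : ℝ)) * ∑ k, ∫ ℓ in (0:ℝ)..Lmax,
      Real.exp (r * ℓ) * D k ω ℓ * (if ℓ ≤ L k then (1:ℝ) else 0))
      = fun ω => (1 / (M:ℝ)) * S ω := by
    funext ω
    congr 1
    refine Finset.sum_congr rfl fun k _ => ?_
    rw [intervalIntegral.integral_of_le hLmax.le]
  rw [hfun, variance_const_mul]
  have hmulout : ∀ (s a b : ℝ), ((1/(M:ℝ)) * s) * a * b = (1/(M:ℝ)) * (s * a * b) := by
    intros; ring
  have hin : ∀ ℓ : ℝ, (∫ ℓ' in (0:ℝ)..Lmax,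
      ((1 / (M:ℝ)) * ∑ k, (if max ℓ ℓ' ≤ L k then (1:ℝ) else 0))
        * Real.exp ((r - β/2) * ℓ) * Real.exp ((r - β/2) * ℓ'))
      = (1/(M:ℝ)) * ∫ ℓ', B0 (ℓ, ℓ') ∂ν := by
    intro ℓ
    rw [intervalIntegral.integral_of_le hLmax.le, ← integral_const_mul]
    refine integral_congr_ae (Filter.Eventually.of_forall fun ℓ' => ?_)
    simp only
    rw [hmulout, hB0, he]
    simp only
    congr 1
    rw [Finset.sum_mul, Finset.sum_mul]
  have hRHS : (∫ ℓ in (0:ℝ)..Lmax, ∫ ℓ' in (0:ℝ)..Lmax,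
      ((1 / (M:ℝ)) * ∑ k, (if max ℓ ℓ' ≤ L k then (1:ℝ) else 0))
        * Real.exp ((r - β/2) * ℓ) * Real.exp ((r - β/2) * ℓ'))
      = (1/(M:ℝ)) * ∫ q, B0 q ∂(ν.prod ν) := by
    rw [intervalIntegral.integral_of_le hLmax.le]
    simp_rw [hin]
    rw [integral_const_mul, integral_prod _ hB0int]
  rw [hRHS]
  calc (1/(M:ℝ))^2 * variance S P
      ≤ (1/(M:ℝ))^2 * (c₂ * ∫ q, B0 q ∂(ν.prod ν)) :=
        mul_le_mul_of_nonneg_left hVarS (by positivity)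
    _ = c₂ / M * ((1/(M:ℝ)) * ∫ q, B0 q ∂(ν.prod ν)) := by ring
end

section
/- Let α > 0, β > 0, r > 0, c₁ > 0, c₂ > 0, c_disc > 0. Define for ε ∈ (0, e^{−1}) the level Λ(ε) := (1/α)·ln(√2·c₁/(α·ε)), and define V(ε, M) := (c_disc·c₂/M²)·A + (c₂/M)·B with A and B as follows: A := (4/(2r−β)²)·(e^{(2r−β)Λ(ε)} + 1) if r ≠ β/2 and A := Λ(ε)² if r = β/2; B := 2/((r−β)(r−β/2))·e^{(r−β)Λ(ε)} + 4/(β(r−β/2))·e^{−(β/2)Λ(ε)} − 4/((r−β)β) if r ∉ {β/2, β}, B := 8/β² if r = β/2, and B := (4/β)·Λ(ε) + 8/β² if r = β. Then there exists a constant C > 0, independent of M and ε, such that for all ε ∈ (0, e^{−1}) and all M ∈ ℕ: V(ε, M) ≤ C·(1/M)·E(ε, M), where E(ε, M) := 1 if r < β/2; E(ε, M) := (ln ε)²/M + 1 if r = β/2; E(ε, M) := ε^{−(2r−β)/α}/M + 1 if β/2 < r < β; E(ε, M) := (ε^{−β/α}/M + 1)·|ln ε| if r = β; and E(ε, M) :=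 (ε^{−r/α}/M + 1)·ε^{−(r−β)/α} if r > β. -/
open Set Real

set_option maxHeartbeats 1600000 in
/-- five-case bound on the variance upper bound, proof of Theorem 4.2.
With the level `Λ(ε) := (1/α)·ln(√2·c₁/(α·ε))` and the explicit variance upper bound
`V(ε, M) := (c_disc·c₂/M²)·A + (c₂/M)·B` (with case-defined `A`, `B`), there exists a
constant `C > 0`, independent of `M` and `ε`, such that for all `ε ∈ (0, e⁻¹)` and all
`M ∈ ℕ`, `V(ε, M) ≤ C·(1/M)·E(ε, M)` with the five-case factor `E(ε, M)` of the paper. -/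
theorem stmt_12 (α β r c₁ c₂ c_disc : ℝ)
    (hα : 0 < α) (hβ : 0 < β) (hr : 0 < r) (hc₁ : 0 < c₁) (hc₂ : 0 < c₂)
    (hcd : 0 < c_disc)
    (Λ : ℝ → ℝ) (hΛ : ∀ ε : ℝ, Λ ε = 1 / α * Real.log (Real.sqrt 2 * c₁ / (α * ε))) :
    ∃ C > (0 : ℝ), ∀ ε ∈ Ioo (0 : ℝ) (Real.exp (-1)), ∀ M : ℕ,
      c_disc * c₂ / (M : ℝ) ^ 2 *
          (if r = β / 2 then (Λ ε) ^ 2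
           else 4 / (2 * r - β) ^ 2 * (Real.exp ((2 * r - β) * Λ ε) + 1))
        + c₂ / M *
          (if r = β / 2 then 8 / β ^ 2
           else if r = β then 4 / β * Λ ε + 8 / β ^ 2
           else
              2 / ((r - β) * (r - β / 2)) * Real.exp ((r - β) * Λ ε)
                + 4 / (β * (r - β / 2)) * Real.exp (-(β / 2) * Λ ε)
                - 4 / ((r - β) * β))
      ≤ C * (1 / (M : ℝ)) *
          (if r < β / 2 then 1
           else if r = β / 2 then (Real.log ε) ^ 2 / M + 1
           else if r < β then ε ^ (-(2 * r - β) / α) / M + 1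
           else if r = β then (ε ^ (-β / α) / M + 1) * |Real.log ε|
           else (ε ^ (-r / α) / M + 1) * ε ^ (-(r - β) / α)) := by
  set K : ℝ := Real.sqrt 2 * c₁ / α with hKdef
  have hK : 0 < K := by rw [hKdef]; positivity
  have hΛ' : ∀ ε : ℝ, Λ ε = 1 / α * Real.log (K / ε) := by
    intro ε; rw [hΛ, hKdef, div_div]
  have key : ∀ ε : ℝ, 0 < ε → ∀ γ : ℝ,
      Real.exp (γ * Λ ε) = K ^ (γ / α) * ε ^ (-(γ / α)) := by
    intro ε hε γ
    have hx : 0 < K / ε := div_pos hK hε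
    rw [hΛ' ε,
      show γ * (1 / α * Real.log (K / ε)) = Real.log (K / ε) * (γ / α) by ring,
      ← Real.rpow_def_of_pos hx, Real.div_rpow hK.le hε.le, Real.rpow_neg hε.le,
      div_eq_mul_inv]
  set a : ℝ := c_disc * c₂ with hadef
  have ha : 0 < a := by rw [hadef]; positivity
  rcases lt_trichotomy r (β / 2) with hc | hc | hc
  · -- case r < β/2
    set k1 : ℝ := K ^ ((2 * r - β) / α) with hk1
    set k2 : ℝ := K ^ ((r - β) / α) with hk2
    have hk1p : 0 < k1 := Real.rpow_pos_of_pos hK _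
    have hk2p : 0 < k2 := Real.rpow_pos_of_pos hK _
    have hbr : 0 < β - 2 * r := by linarith
    have hbr2 : 0 < β - r := by linarith
    have hbr3 : 0 < β / 2 - r := by linarith
    set A' : ℝ := 4 / (β - 2 * r) ^ 2 * (k1 + 1) with hA'def
    set B' : ℝ := 2 / ((β - r) * (β / 2 - r)) * k2 + 4 / ((β - r) * β) with hB'def
    have hA'p : 0 < A' := by rw [hA'def]; positivity
    have hB'p : 0 < B' := by rw [hB'def]; positivity
    refine ⟨a * A' + c₂ * B' + 1, by positivity, ?_⟩
    intro ε hε M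
    simp only [if_neg (ne_of_lt hc), if_neg (show r ≠ β by intro h; rw [h] at hc; linarith),
      if_pos hc]
    obtain ⟨hε0, hεe⟩ := hε
    have hε1 : ε ≤ 1 := by
      have h2 : Real.exp (-1 : ℝ) < Real.exp 0 := Real.exp_lt_exp.mpr (by norm_num)
      rw [Real.exp_zero] at h2; linarith
    rcases Nat.eq_zero_or_pos M with hM | hM
    · subst hM; simp
    have hM1 : (1 : ℝ) ≤ M := by exact_mod_cast hM
    have hM0 : (0 : ℝ) < M := by linarith
    have e1 : Real.exp ((2 * r - β) * Λ ε) ≤ k1 := by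
      rw [key ε hε0]
      have h1 : ε ^ (-((2 * r - β) / α)) ≤ 1 := by
        apply Real.rpow_le_one hε0.le hε1
        rw [show -((2 * r - β) / α) = (β - 2 * r) / α by ring]
        positivity
      calc K ^ ((2 * r - β) / α) * ε ^ (-((2 * r - β) / α))
          ≤ K ^ ((2 * r - β) / α) * 1 := by
            exact mul_le_mul_of_nonneg_left h1 (Real.rpow_pos_of_pos hK _).le
        _ = k1 := by rw [mul_one]
    have e2 : Real.exp ((r - β) * Λ ε) ≤ k2 := by
      rw [key ε hε0]
      have h1 : ε ^ (-((r - β) / α)) ≤ 1 := by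
        apply Real.rpow_le_one hε0.le hε1
        rw [show -((r - β) / α) = (β - r) / α by ring]
        positivity
      calc K ^ ((r - β) / α) * ε ^ (-((r - β) / α))
          ≤ K ^ ((r - β) / α) * 1 := by
            exact mul_le_mul_of_nonneg_left h1 (Real.rpow_pos_of_pos hK _).le
        _ = k2 := by rw [mul_one]
    have hA : 4 / (2 * r - β) ^ 2 * (Real.exp ((2 * r - β) * Λ ε) + 1) ≤ A' := by
      rw [hA'def, show (2 * r - β) ^ 2 = (β - 2 * r) ^ 2 by ring]
      have : (0:ℝ) ≤ 4 / (β - 2 * r) ^ 2 := by positivity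
      exact mul_le_mul_of_nonneg_left (by linarith) this
    have hB : 2 / ((r - β) * (r - β / 2)) * Real.exp ((r - β) * Λ ε)
        + 4 / (β * (r - β / 2)) * Real.exp (-(β / 2) * Λ ε)
        - 4 / ((r - β) * β) ≤ B' := by
      have hco1 : (r - β) * (r - β / 2) = (β - r) * (β / 2 - r) := by ring
      have hco3 : 4 / ((r - β) * β) = -(4 / ((β - r) * β)) := by
        rw [show (r - β) * β = -((β - r) * β) by ring, div_neg]
      have hneg : 4 / (β * (r - β / 2)) < 0 :=
        div_neg_of_pos_of_neg (by norm_num) (mul_neg_of_pos_of_neg hβ (by linarith))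
      have ht2 : 4 / (β * (r - β / 2)) * Real.exp (-(β / 2) * Λ ε) ≤ 0 :=
        (mul_neg_of_neg_of_pos hneg (Real.exp_pos _)).le
      have ht1 : 2 / ((r - β) * (r - β / 2)) * Real.exp ((r - β) * Λ ε)
          ≤ 2 / ((β - r) * (β / 2 - r)) * k2 := by
        rw [hco1]
        exact mul_le_mul_of_nonneg_left e2 (by positivity)
      rw [hB'def]
      rw [hco3]
      linarith
    have hApos : (0:ℝ) ≤ 4 / (2 * r - β) ^ 2 * (Real.exp ((2 * r - β) * Λ ε) + 1) := by
      positivity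
    have hdiv : a / (M : ℝ) ^ 2 ≤ a / M := by
      apply div_le_div_of_nonneg_left ha.le hM0
      nlinarith
    calc a / (M : ℝ) ^ 2 * (4 / (2 * r - β) ^ 2 * (Real.exp ((2 * r - β) * Λ ε) + 1))
          + c₂ / M * (2 / ((r - β) * (r - β / 2)) * Real.exp ((r - β) * Λ ε)
              + 4 / (β * (r - β / 2)) * Real.exp (-(β / 2) * Λ ε) - 4 / ((r - β) * β))
        ≤ a / (M : ℝ) ^ 2 * A' + c₂ / M * B' :=
          add_le_add (mul_le_mul_of_nonneg_left hA (by positivity))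
            (mul_le_mul_of_nonneg_left hB (by positivity))
      _ ≤ a / M * A' + c₂ / M * B' :=
          add_le_add_left (mul_le_mul_of_nonneg_right hdiv hA'p.le) _
      _ = (1 / M) * (a * A' + c₂ * B') := by ring
      _ ≤ (1 / M) * (a * A' + c₂ * B' + 1) := by
          apply mul_le_mul_of_nonneg_left (by linarith) (by positivity)
      _ = (a * A' + c₂ * B' + 1) * (1 / M) * 1 := by ring
  · -- case r = β/2
    subst hc
    set cL : ℝ := (|Real.log K| + 1) / α with hcLdef
    have hcL : 0 < cL := by rw [hcLdef]; positivity
    refine ⟨a * cL ^ 2 + c₂ * (8 / β ^ 2) + 1, by positivity, ?_⟩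
    intro ε hε M
    simp only [eq_self_iff_true, if_true, lt_self_iff_false, if_false]
    obtain ⟨hε0, hεe⟩ := hε
    have hlog : Real.log ε < -1 := by
      have := Real.log_lt_log hε0 hεe
      rwa [Real.log_exp] at this
    rcases Nat.eq_zero_or_pos M with hM | hM
    · subst hM; simp
    have hM1 : (1 : ℝ) ≤ M := by exact_mod_cast hM
    have hM0 : (0 : ℝ) < M := by linarith
    have hLam : (Λ ε) ^ 2 ≤ cL ^ 2 * (Real.log ε) ^ 2 := by
      have hltz : Real.log ε < 0 := by linarith
      have habs : |Λ ε| ≤ cL * (-Real.log ε) := by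
        rw [hΛ' ε, Real.log_div hK.ne' hε0.ne', hcLdef]
        have e0 : |1 / α * (Real.log K - Real.log ε)|
            = 1 / α * |Real.log K + -Real.log ε| := by
          rw [abs_mul, abs_of_pos (show (0:ℝ) < 1/α by positivity), sub_eq_add_neg]
        calc |1 / α * (Real.log K - Real.log ε)|
            = 1 / α * |Real.log K + -Real.log ε| := e0
          _ ≤ 1 / α * (|Real.log K| + |-Real.log ε|) :=
              mul_le_mul_of_nonneg_left (abs_add_le _ _) (by positivity)
          _ = 1 / α * (|Real.log K| + -Real.log ε) := by
              rw [abs_neg, abs_of_neg hltz]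
          _ ≤ 1 / α * ((|Real.log K| + 1) * (-Real.log ε)) := by
              apply mul_le_mul_of_nonneg_left _ (by positivity)
              nlinarith [mul_nonneg (abs_nonneg (Real.log K))
                (show (0:ℝ) ≤ -Real.log ε - 1 by linarith)]
          _ = (|Real.log K| + 1) / α * (-Real.log ε) := by ring
      calc (Λ ε) ^ 2 = |Λ ε| ^ 2 := (sq_abs _).symm
        _ ≤ (cL * (-Real.log ε)) ^ 2 := by
            apply pow_le_pow_left₀ (abs_nonneg _) habs
        _ = cL ^ 2 * (Real.log ε) ^ 2 := by ring
    calc a / (M : ℝ) ^ 2 * (Λ ε) ^ 2 + c₂ / M * (8 / β ^ 2)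
        ≤ a / (M : ℝ) ^ 2 * (cL ^ 2 * (Real.log ε) ^ 2) + c₂ / M * (8 / β ^ 2) :=
          add_le_add_left (mul_le_mul_of_nonneg_left hLam (by positivity)) _
      _ = (1 / M) * ((a * cL ^ 2) * ((Real.log ε) ^ 2 / M) + c₂ * (8 / β ^ 2)) := by ring
      _ ≤ (1 / M) * ((a * cL ^ 2 + c₂ * (8 / β ^ 2) + 1) * ((Real.log ε) ^ 2 / M)
            + (a * cL ^ 2 + c₂ * (8 / β ^ 2) + 1)) := by
          apply mul_le_mul_of_nonneg_left _ (by positivity)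
          have h1 : (a * cL ^ 2) * ((Real.log ε) ^ 2 / M)
              ≤ (a * cL ^ 2 + c₂ * (8 / β ^ 2) + 1) * ((Real.log ε) ^ 2 / M) := by
            have hnn : (0:ℝ) ≤ c₂ * (8 / β ^ 2) := by positivity
            exact mul_le_mul_of_nonneg_right (by linarith) (by positivity)
          have h2 : c₂ * (8 / β ^ 2) ≤ a * cL ^ 2 + c₂ * (8 / β ^ 2) + 1 := by
            have hnn : (0:ℝ) ≤ a * cL ^ 2 := by positivity
            linarith
          linarith
      _ = (a * cL ^ 2 + c₂ * (8 / β ^ 2) + 1) * (1 / M) * ((Real.log ε) ^ 2 / M + 1) := by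
          ring
  · -- case β/2 < r
    rcases lt_trichotomy r β with hlt | heq | hc
    · -- β/2 < r < β
      set k1 : ℝ := K ^ ((2 * r - β) / α) with hk1
      set k3 : ℝ := K ^ (-(β / 2) / α) with hk3
      have hk1p : 0 < k1 := Real.rpow_pos_of_pos hK _
      have hk3p : 0 < k3 := Real.rpow_pos_of_pos hK _
      have hs : 0 < 2 * r - β := by linarith
      have hs2 : 0 < (2 * r - β) ^ 2 := pow_pos hs 2
      have hrb : 0 < β - r := by linarith
      have hrb2 : 0 < r - β / 2 := by linarith
      have hq : (0:ℝ) < 4 / (2 * r - β) ^ 2 := by positivity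
      set B' : ℝ := 4 / (β * (r - β / 2)) * k3 + 4 / ((β - r) * β) with hB'def
      have hB'p : 0 < B' := by
        rw [hB'def]
        have h1 : 0 < 4 / (β * (r - β / 2)) * k3 := by positivity
        have h2 : 0 < 4 / ((β - r) * β) := by positivity
        linarith
      set C : ℝ := a * (4 / (2 * r - β) ^ 2) * (k1 + 1) + c₂ * B' + 1 with hCdef
      have hC : 0 < C := by
        rw [hCdef]
        have h1 : 0 < a * (4 / (2 * r - β) ^ 2) * (k1 + 1) := by positivity
        have h2 : 0 < c₂ * B' := mul_pos hc₂ hB'p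
        linarith
      refine ⟨C, hC, ?_⟩
      intro ε hε M
      simp only [if_neg (ne_of_gt hc), if_neg (ne_of_lt hlt), if_neg (not_lt.mpr hc.le),
        if_pos hlt]
      obtain ⟨hε0, hεe⟩ := hε
      have hε1 : ε ≤ 1 := by
        have h2 : Real.exp (-1 : ℝ) < Real.exp 0 := Real.exp_lt_exp.mpr (by norm_num)
        rw [Real.exp_zero] at h2; linarith
      rcases Nat.eq_zero_or_pos M with hM | hM
      · subst hM; simp
      have hM1 : (1 : ℝ) ≤ M := by exact_mod_cast hM
      have hM0 : (0 : ℝ) < M := by linarith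
      set X : ℝ := ε ^ (-(2 * r - β) / α) with hXdef
      have hXnn : 0 ≤ X := by rw [hXdef]; positivity
      have eX : Real.exp ((2 * r - β) * Λ ε) = k1 * X := by
        rw [key ε hε0, hXdef, neg_div]
      have e3 : Real.exp (-(β / 2) * Λ ε) ≤ k3 := by
        rw [key ε hε0]
        have h1 : ε ^ (-(-(β / 2) / α)) ≤ 1 := by
          apply Real.rpow_le_one hε0.le hε1
          rw [show -(-(β / 2) / α) = (β / 2) / α by ring]
          positivity
        calc K ^ (-(β / 2) / α) * ε ^ (-(-(β / 2) / α))
            ≤ K ^ (-(β / 2) / α) * 1 :=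
              mul_le_mul_of_nonneg_left h1 (Real.rpow_pos_of_pos hK _).le
          _ = k3 := by rw [mul_one]
      have hB : 2 / ((r - β) * (r - β / 2)) * Real.exp ((r - β) * Λ ε)
          + 4 / (β * (r - β / 2)) * Real.exp (-(β / 2) * Λ ε)
          - 4 / ((r - β) * β) ≤ B' := by
        have ht1 : 2 / ((r - β) * (r - β / 2)) * Real.exp ((r - β) * Λ ε) ≤ 0 := by
          have : 2 / ((r - β) * (r - β / 2)) < 0 :=
            div_neg_of_pos_of_neg (by norm_num)
              (mul_neg_of_neg_of_pos (by linarith) hrb2)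
          exact (mul_neg_of_neg_of_pos this (Real.exp_pos _)).le
        have ht2 : 4 / (β * (r - β / 2)) * Real.exp (-(β / 2) * Λ ε)
            ≤ 4 / (β * (r - β / 2)) * k3 :=
          mul_le_mul_of_nonneg_left e3 (by positivity)
        have ht3 : 4 / ((r - β) * β) = -(4 / ((β - r) * β)) := by
          rw [show (r - β) * β = -((β - r) * β) by ring, div_neg]
        rw [hB'def, ht3]
        linarith
      calc a / (M : ℝ) ^ 2 * (4 / (2 * r - β) ^ 2 * (Real.exp ((2 * r - β) * Λ ε) + 1))
            + c₂ / M * (2 / ((r - β) * (r - β / 2)) * Real.exp ((r - β) * Λ ε)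
                + 4 / (β * (r - β / 2)) * Real.exp (-(β / 2) * Λ ε) - 4 / ((r - β) * β))
          ≤ a / (M : ℝ) ^ 2 * (4 / (2 * r - β) ^ 2 * (k1 * X + 1)) + c₂ / M * B' := by
            rw [eX]
            exact add_le_add_right (le_refl _) _ |>.trans
              (add_le_add_right (mul_le_mul_of_nonneg_left hB (by positivity)) _)
        _ = (1 / M) * ((a * (4 / (2 * r - β) ^ 2) * k1) * (X / M)
              + (a * (4 / (2 * r - β) ^ 2)) * (1 / M) + c₂ * B') := by ring
        _ ≤ (1 / M) * (C * (X / M) + C) := by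
            apply mul_le_mul_of_nonneg_left _ (by positivity)
            have h1 : (a * (4 / (2 * r - β) ^ 2) * k1) * (X / M) ≤ C * (X / M) := by
              apply mul_le_mul_of_nonneg_right _ (by positivity)
              rw [hCdef]
              have hexp : a * (4 / (2 * r - β) ^ 2) * (k1 + 1)
                  = a * (4 / (2 * r - β) ^ 2) * k1 + a * (4 / (2 * r - β) ^ 2) := by ring
              have hp1 : 0 < a * (4 / (2 * r - β) ^ 2) := by positivity
              have hp2 : 0 < c₂ * B' := mul_pos hc₂ hB'p
              linarith
            have h2 : (a * (4 / (2 * r - β) ^ 2)) * (1 / M) ≤ a * (4 / (2 * r - β) ^ 2) := by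
              apply mul_le_of_le_one_right (by positivity)
              rw [div_le_one hM0]; exact hM1
            have h3 : a * (4 / (2 * r - β) ^ 2) + c₂ * B' ≤ C := by
              rw [hCdef]
              have hexp : a * (4 / (2 * r - β) ^ 2) * (k1 + 1)
                  = a * (4 / (2 * r - β) ^ 2) * k1 + a * (4 / (2 * r - β) ^ 2) := by ring
              have hp1 : 0 < a * (4 / (2 * r - β) ^ 2) * k1 := by positivity
              linarith
            linarith
        _ = C * (1 / M) * (X / M + 1) := by ring
    · -- r = β
      replace heq := heq.symm
      subst heq
      have hne : β ≠ β / 2 := by intro h; linarith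
      set cL : ℝ := (|Real.log K| + 1) / α with hcLdef
      have hcL : 0 < cL := by rw [hcLdef]; positivity
      set k1 : ℝ := K ^ ((2 * β - β) / α) with hk1
      have hk1p : 0 < k1 := Real.rpow_pos_of_pos hK _
      have hs2 : 0 < (2 * β - β) ^ 2 := pow_pos (by linarith) 2
      set C : ℝ := a * (4 / (2 * β - β) ^ 2) * k1 + a * (4 / (2 * β - β) ^ 2)
          + c₂ * (4 / β) * cL + c₂ * (8 / β ^ 2) + 1 with hCdef
      have hq : 0 < 4 / (2 * β - β) ^ 2 := by positivity
      have hC : 0 < C := by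
        rw [hCdef]
        have h1 : 0 < a * (4 / (2 * β - β) ^ 2) * k1 := by positivity
        have h2 : 0 < a * (4 / (2 * β - β) ^ 2) := by positivity
        have h3 : 0 < c₂ * (4 / β) * cL := by positivity
        have h4 : 0 < c₂ * (8 / β ^ 2) := by positivity
        linarith
      refine ⟨C, hC, ?_⟩
      intro ε hε M
      simp only [if_neg hne, if_neg (show ¬ β < β / 2 by linarith), eq_self_iff_true,
        if_true, lt_self_iff_false, if_false]
      obtain ⟨hε0, hεe⟩ := hε
      have hε1 : ε ≤ 1 := by
        have h2 : Real.exp (-1 : ℝ) < Real.exp 0 := Real.exp_lt_exp.mpr (by norm_num)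
        rw [Real.exp_zero] at h2; linarith
      have hlog : Real.log ε < -1 := by
        have := Real.log_lt_log hε0 hεe
        rwa [Real.log_exp] at this
      have hltz : Real.log ε < 0 := by linarith
      rcases Nat.eq_zero_or_pos M with hM | hM
      · subst hM; simp
      have hM1 : (1 : ℝ) ≤ M := by exact_mod_cast hM
      have hM0 : (0 : ℝ) < M := by linarith
      set S : ℝ := -Real.log ε with hSdef
      have hS1 : 1 ≤ S := by rw [hSdef]; linarith
      have habsS : |Real.log ε| = S := by rw [hSdef, abs_of_neg hltz]
      set X : ℝ := ε ^ (-β / α) with hXdef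
      have hXnn : 0 ≤ X := by rw [hXdef]; positivity
      have eX : Real.exp ((2 * β - β) * Λ ε) = k1 * X := by
        rw [key ε hε0, hXdef, show -((2 * β - β) / α) = -β / α by ring]
      have hLam : Λ ε ≤ cL * S := by
        rw [hΛ' ε, Real.log_div hK.ne' hε0.ne', hcLdef, hSdef]
        have h2 : Real.log K ≤ |Real.log K| := le_abs_self _
        have h3 : |Real.log K| + -Real.log ε ≤ (|Real.log K| + 1) * (-Real.log ε) := by
          nlinarith [mul_nonneg (abs_nonneg (Real.log K))
            (show (0:ℝ) ≤ -Real.log ε - 1 by linarith)]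
        calc 1 / α * (Real.log K - Real.log ε)
            ≤ 1 / α * ((|Real.log K| + 1) * (-Real.log ε)) := by
              apply mul_le_mul_of_nonneg_left _ (by positivity)
              linarith
          _ = (|Real.log K| + 1) / α * (-Real.log ε) := by ring
      calc a / (M : ℝ) ^ 2 * (4 / (2 * β - β) ^ 2 * (Real.exp ((2 * β - β) * Λ ε) + 1))
            + c₂ / M * (4 / β * Λ ε + 8 / β ^ 2)
          ≤ a / (M : ℝ) ^ 2 * (4 / (2 * β - β) ^ 2 * (k1 * X + 1))
              + c₂ / M * (4 / β * (cL * S) + 8 / β ^ 2) := by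
            rw [eX]
            apply add_le_add_right
            apply mul_le_mul_of_nonneg_left _ (by positivity)
            apply add_le_add_left
            exact mul_le_mul_of_nonneg_left hLam (by positivity)
        _ = (1 / M) * ((a * (4 / (2 * β - β) ^ 2) * k1) * (X / M)
              + (a * (4 / (2 * β - β) ^ 2)) * (1 / M)
              + (c₂ * (4 / β) * cL) * S + c₂ * (8 / β ^ 2)) := by ring
        _ ≤ (1 / M) * (C * ((X / M) * S) + C * S) := by
            apply mul_le_mul_of_nonneg_left _ (by positivity)
            have hp1 : 0 < a * (4 / (2 * β - β) ^ 2) * k1 := by positivity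
            have hp2 : 0 < a * (4 / (2 * β - β) ^ 2) := by positivity
            have hp3 : 0 < c₂ * (4 / β) * cL := by positivity
            have hp4 : 0 < c₂ * (8 / β ^ 2) := by positivity
            have h1 : (a * (4 / (2 * β - β) ^ 2) * k1) * (X / M) ≤ C * ((X / M) * S) := by
              calc (a * (4 / (2 * β - β) ^ 2) * k1) * (X / M) ≤ C * (X / M) := by
                    apply mul_le_mul_of_nonneg_right _ (by positivity)
                    rw [hCdef]; linarith
                _ ≤ C * (X / M) * S := le_mul_of_one_le_right (by positivity) hS1
                _ = C * ((X / M) * S) := by ring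
            have h2 : (a * (4 / (2 * β - β) ^ 2)) * (1 / M) ≤ a * (4 / (2 * β - β) ^ 2) := by
              apply mul_le_of_le_one_right hp2.le
              rw [div_le_one hM0]; exact hM1
            have e2 : a * (4 / (2 * β - β) ^ 2) ≤ (a * (4 / (2 * β - β) ^ 2)) * S :=
              le_mul_of_one_le_right hp2.le hS1
            have e4 : c₂ * (8 / β ^ 2) ≤ (c₂ * (8 / β ^ 2)) * S :=
              le_mul_of_one_le_right hp4.le hS1
            have e5 : (a * (4 / (2 * β - β) ^ 2) + c₂ * (4 / β) * cL + c₂ * (8 / β ^ 2)) * S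
                ≤ C * S := by
              apply mul_le_mul_of_nonneg_right _ (by linarith)
              rw [hCdef]; linarith
            have e6 : (a * (4 / (2 * β - β) ^ 2)) * S + (c₂ * (4 / β) * cL) * S
                + (c₂ * (8 / β ^ 2)) * S
                = (a * (4 / (2 * β - β) ^ 2) + c₂ * (4 / β) * cL + c₂ * (8 / β ^ 2)) * S := by
              ring
            linarith
        _ = C * (1 / M) * ((X / M + 1) * |Real.log ε|) := by rw [habsS]; ring
    · -- r > β
      set k1 : ℝ := K ^ ((2 * r - β) / α) with hk1
      set k2 : ℝ := K ^ ((r - β) / α) with hk2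
      set k3 : ℝ := K ^ (-(β / 2) / α) with hk3
      have hk1p : 0 < k1 := Real.rpow_pos_of_pos hK _
      have hk2p : 0 < k2 := Real.rpow_pos_of_pos hK _
      have hk3p : 0 < k3 := Real.rpow_pos_of_pos hK _
      have hs : 0 < 2 * r - β := by linarith
      have hs2 : 0 < (2 * r - β) ^ 2 := pow_pos hs 2
      have hrb : 0 < r - β := by linarith
      have hrb2 : 0 < r - β / 2 := by linarith
      have hq : (0:ℝ) < 4 / (2 * r - β) ^ 2 := by positivity
      have hc2p : (0:ℝ) < 2 / ((r - β) * (r - β / 2)) := by positivity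
      have hc3p : (0:ℝ) < 4 / (β * (r - β / 2)) := by positivity
      set C : ℝ := a * (4 / (2 * r - β) ^ 2) * k1 + a * (4 / (2 * r - β) ^ 2)
          + c₂ * (2 / ((r - β) * (r - β / 2))) * k2 + c₂ * (4 / (β * (r - β / 2))) * k3
          + 1 with hCdef
      have hC : 0 < C := by
        rw [hCdef]
        have h1 : 0 < a * (4 / (2 * r - β) ^ 2) * k1 := by positivity
        have h2 : 0 < a * (4 / (2 * r - β) ^ 2) := by positivity
        have h3 : 0 < c₂ * (2 / ((r - β) * (r - β / 2))) * k2 := by positivity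
        have h4 : 0 < c₂ * (4 / (β * (r - β / 2))) * k3 := by positivity
        linarith
      refine ⟨C, hC, ?_⟩
      intro ε hε M
      simp only [if_neg (show r ≠ β / 2 by intro h; rw [h] at hc; linarith),
        if_neg (ne_of_gt hc), if_neg (not_lt.mpr (show β / 2 ≤ r by linarith)),
        if_neg (not_lt.mpr hc.le)]
      obtain ⟨hε0, hεe⟩ := hε
      have hε1 : ε ≤ 1 := by
        have h2 : Real.exp (-1 : ℝ) < Real.exp 0 := Real.exp_lt_exp.mpr (by norm_num)
        rw [Real.exp_zero] at h2; linarith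
      rcases Nat.eq_zero_or_pos M with hM | hM
      · subst hM; simp
      have hM1 : (1 : ℝ) ≤ M := by exact_mod_cast hM
      have hM0 : (0 : ℝ) < M := by linarith
      set X : ℝ := ε ^ (-r / α) with hXdef
      set Y : ℝ := ε ^ (-(r - β) / α) with hYdef
      have hXnn : 0 ≤ X := by rw [hXdef]; positivity
      have hY1 : 1 ≤ Y := by
        rw [hYdef]
        apply Real.one_le_rpow_of_pos_of_le_one_of_nonpos hε0 hε1
        rw [show -(r - β) / α = -((r - β) / α) by ring]
        simp only [neg_nonpos]
        positivity
      have hYnn : 0 ≤ Y := by linarith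
      have eXY : Real.exp ((2 * r - β) * Λ ε) = k1 * (X * Y) := by
        rw [key ε hε0, hXdef, hYdef, ← Real.rpow_add hε0,
          show -r / α + -(r - β) / α = -((2 * r - β) / α) by ring]
      have eY : Real.exp ((r - β) * Λ ε) = k2 * Y := by
        rw [key ε hε0, hYdef, neg_div]
      have e3 : Real.exp (-(β / 2) * Λ ε) ≤ k3 := by
        rw [key ε hε0]
        have h1 : ε ^ (-(-(β / 2) / α)) ≤ 1 := by
          apply Real.rpow_le_one hε0.le hε1
          rw [show -(-(β / 2) / α) = (β / 2) / α by ring]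
          positivity
        calc K ^ (-(β / 2) / α) * ε ^ (-(-(β / 2) / α))
            ≤ K ^ (-(β / 2) / α) * 1 :=
              mul_le_mul_of_nonneg_left h1 (Real.rpow_pos_of_pos hK _).le
          _ = k3 := by rw [mul_one]
      have hB : 2 / ((r - β) * (r - β / 2)) * Real.exp ((r - β) * Λ ε)
          + 4 / (β * (r - β / 2)) * Real.exp (-(β / 2) * Λ ε)
          - 4 / ((r - β) * β)
          ≤ 2 / ((r - β) * (r - β / 2)) * (k2 * Y) + 4 / (β * (r - β / 2)) * k3 := by
        have ht2 : 4 / (β * (r - β / 2)) * Real.exp (-(β / 2) * Λ ε)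
            ≤ 4 / (β * (r - β / 2)) * k3 :=
          mul_le_mul_of_nonneg_left e3 hc3p.le
        have ht3 : 0 < 4 / ((r - β) * β) := by positivity
        rw [eY]
        linarith
      calc a / (M : ℝ) ^ 2 * (4 / (2 * r - β) ^ 2 * (Real.exp ((2 * r - β) * Λ ε) + 1))
            + c₂ / M * (2 / ((r - β) * (r - β / 2)) * Real.exp ((r - β) * Λ ε)
                + 4 / (β * (r - β / 2)) * Real.exp (-(β / 2) * Λ ε) - 4 / ((r - β) * β))
          ≤ a / (M : ℝ) ^ 2 * (4 / (2 * r - β) ^ 2 * (k1 * (X * Y) + 1))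
              + c₂ / M * (2 / ((r - β) * (r - β / 2)) * (k2 * Y)
                + 4 / (β * (r - β / 2)) * k3) := by
            rw [eXY]
            exact add_le_add_right (mul_le_mul_of_nonneg_left hB (by positivity)) _
        _ = (1 / M) * ((a * (4 / (2 * r - β) ^ 2) * k1) * ((X / M) * Y)
              + (a * (4 / (2 * r - β) ^ 2)) * (1 / M)
              + (c₂ * (2 / ((r - β) * (r - β / 2))) * k2) * Y
              + (c₂ * (4 / (β * (r - β / 2))) * k3)) := by ring
        _ ≤ (1 / M) * (C * ((X / M) * Y) + C * Y) := by
            apply mul_le_mul_of_nonneg_left _ (by positivity)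
            have hp1 : 0 < a * (4 / (2 * r - β) ^ 2) * k1 := by positivity
            have hp2 : 0 < a * (4 / (2 * r - β) ^ 2) := by positivity
            have hp3 : 0 < c₂ * (2 / ((r - β) * (r - β / 2))) * k2 := by positivity
            have hp4 : 0 < c₂ * (4 / (β * (r - β / 2))) * k3 := by positivity
            have h1 : (a * (4 / (2 * r - β) ^ 2) * k1) * ((X / M) * Y)
                ≤ C * ((X / M) * Y) := by
              apply mul_le_mul_of_nonneg_right _ (by positivity)
              rw [hCdef]; linarith
            have h2 : (a * (4 / (2 * r - β) ^ 2)) * (1 / M)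
                ≤ a * (4 / (2 * r - β) ^ 2) := by
              apply mul_le_of_le_one_right hp2.le
              rw [div_le_one hM0]; exact hM1
            have e2 : a * (4 / (2 * r - β) ^ 2) ≤ (a * (4 / (2 * r - β) ^ 2)) * Y :=
              le_mul_of_one_le_right hp2.le hY1
            have e4 : c₂ * (4 / (β * (r - β / 2))) * k3
                ≤ (c₂ * (4 / (β * (r - β / 2))) * k3) * Y :=
              le_mul_of_one_le_right hp4.le hY1
            have e5 : (a * (4 / (2 * r - β) ^ 2) + c₂ * (2 / ((r - β) * (r - β / 2))) * k2
                + c₂ * (4 / (β * (r - β / 2))) * k3) * Y ≤ C * Y := by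
              apply mul_le_mul_of_nonneg_right _ hYnn
              rw [hCdef]; linarith
            have e6 : (a * (4 / (2 * r - β) ^ 2)) * Y
                + (c₂ * (2 / ((r - β) * (r - β / 2))) * k2) * Y
                + (c₂ * (4 / (β * (r - β / 2))) * k3) * Y
                = (a * (4 / (2 * r - β) ^ 2) + c₂ * (2 / ((r - β) * (r - β / 2))) * k2
                  + c₂ * (4 / (β * (r - β / 2))) * k3) * Y := by ring
            linarith
        _ = C * (1 / M) * ((X / M + 1) * Y) := by ring
end

section
/- Let α > 0, r > 0, c₁ > 0, c_disc > 0. Define for ε ∈ (0, e^{−1}) the level Λ(ε) := (1/α)·ln(√2·c₁/(α·ε)), and define B₂(ε, M) := (c_disc²/M²)·c₁²·Λ(ε)² + (c_disc/M)·(2c₁²/α)·Λ(ε)·e^{−αΛ(ε)} if r = α, and B₂(ε, M) := (c_disc²/M²)·c₁²·(1/(r−α)²)·(e^{2(r−α)Λ(ε)} + 1) + (c_disc/M)·(2c₁²/α)·(1/(r−α))·(e^{(r−2α)Λ(ε)} − e^{−αΛ(ε)}) if r ≠ α. Then there exists a constant C > 0, independent of M and ε, such that for all ε ∈ (0, e^{−1})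 and all M ∈ ℕ: B₂(ε, M) ≤ C·(1/M)·E(ε, M), where E(ε, M) := 1 if r < α; E(ε, M) := (ln ε)²/M + 1 if r = α; E(ε, M) := ε^{−2}/M + 1 if α < r ≤ 2α; and E(ε, M) := (ε^{−r/α}/M + 1)·ε^{−(r−2α)/α} if r > 2α. -/
open Set Real

set_option maxHeartbeats 1000000 in
/-- four-case bound on the discrepancy-induced squared-bias term `B₂`,
proof of Theorem 4.2. With the level `Λ(ε) := (1/α)·ln(√2·c₁/(α·ε))` and
`B₂(ε, M)` defined by the two cases `r = α` and `r ≠ α` of the paper, there exists a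
constant `C > 0`, independent of `M` and `ε`, such that for all `ε ∈ (0, e⁻¹)` and all
`M ∈ ℕ`, `B₂(ε, M) ≤ C·(1/M)·E(ε, M)` with the four-case factor `E(ε, M)` of the paper. -/
theorem stmt_13 (α r c₁ c_disc : ℝ)
    (hα : 0 < α) (hr : 0 < r) (hc₁ : 0 < c₁) (hcd : 0 < c_disc)
    (Λ : ℝ → ℝ) (hΛ : ∀ ε : ℝ, Λ ε = 1 / α * Real.log (Real.sqrt 2 * c₁ / (α * ε))) :
    ∃ C > (0 : ℝ), ∀ ε ∈ Ioo (0 : ℝ) (Real.exp (-1)), ∀ M : ℕ,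
      (if r = α then
          c_disc ^ 2 / (M : ℝ) ^ 2 * c₁ ^ 2 * (Λ ε) ^ 2
            + c_disc / M * (2 * c₁ ^ 2 / α) * Λ ε * Real.exp (-α * Λ ε)
       else
          c_disc ^ 2 / (M : ℝ) ^ 2 * c₁ ^ 2 * (1 / (r - α) ^ 2) *
              (Real.exp (2 * (r - α) * Λ ε) + 1)
            + c_disc / M * (2 * c₁ ^ 2 / α) * (1 / (r - α)) *
              (Real.exp ((r - 2 * α) * Λ ε) - Real.exp (-α * Λ ε)))
      ≤ C * (1 / (M : ℝ)) *
          (if r < α then 1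
           else if r = α then (Real.log ε) ^ 2 / M + 1
           else if r ≤ 2 * α then ε ^ (-2 : ℝ) / M + 1
           else (ε ^ (-r / α) / M + 1) * ε ^ (-(r - 2 * α) / α)) := by
  set K : ℝ := Real.sqrt 2 * c₁ / α with hKdef
  have hK : 0 < K := by
    have h2 : (0:ℝ) < Real.sqrt 2 := by positivity
    positivity
  have key : ∀ ε : ℝ, 0 < ε → ∀ c : ℝ,
      Real.exp (c * Λ ε) = K ^ (c / α) * ε ^ (-(c / α)) := by
    intro ε hε c
    have h1 : Real.sqrt 2 * c₁ / (α * ε) = K / ε := by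
      rw [hKdef, div_div]
    have hKε : 0 < K / ε := div_pos hK hε
    rw [hΛ, h1, show c * (1 / α * Real.log (K / ε)) = Real.log (K / ε) * (c / α) by ring,
       ← Real.rpow_def_of_pos hKε, Real.div_rpow hK.le hε.le, Real.rpow_neg hε.le,
       div_eq_mul_inv]
  clear_value K
  have hεf : ∀ ε ∈ Ioo (0:ℝ) (Real.exp (-1)), ε ≤ 1 ∧ Real.log ε ≤ -1 := by
    intro ε hε
    have h1 : Real.exp (-1 : ℝ) < 1 := by
      calc Real.exp (-1 : ℝ) < Real.exp 0 := Real.exp_lt_exp.mpr (by norm_num)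
        _ = 1 := Real.exp_zero
    constructor
    · exact le_of_lt (hε.2.trans h1)
    · have := Real.log_lt_log hε.1 hε.2
      rw [Real.log_exp] at this
      linarith
  rcases lt_trichotomy r α with hc | hc | hc
  · -- Case r < α
    have hne : r - α ≠ 0 := by intro h; nlinarith
    have hsq : (0:ℝ) < (r - α) ^ 2 := by
      have := mul_pos_of_neg_of_neg (show r - α < 0 by linarith) (show r - α < 0 by linarith)
      nlinarith
    obtain ⟨A, hA⟩ : ∃ A : ℝ, A = K ^ (2 * (r - α) / α) := ⟨_, rfl⟩
    have hA0 : 0 < A := hA ▸ Real.rpow_pos_of_pos hK _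
    obtain ⟨D, hD⟩ : ∃ D : ℝ, D = c_disc ^ 2 * c₁ ^ 2 * (1 / (r - α) ^ 2) := ⟨_, rfl⟩
    have hD0 : 0 < D := by
      rw [hD]
      exact mul_pos (by positivity) (one_div_pos.mpr hsq)
    obtain ⟨c₂, hc₂⟩ : ∃ c₂ : ℝ, c₂ = c_disc * (2 * c₁ ^ 2 / α) * (1 / (r - α)) := ⟨_, rfl⟩
    have hc₂neg : c₂ < 0 := by
      rw [hc₂]
      have h1 : 1 / (r - α) < 0 := by
        apply div_neg_of_pos_of_neg one_pos; linarith
      have h2 : 0 < c_disc * (2 * c₁ ^ 2 / α) := by positivity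
      exact mul_neg_of_pos_of_neg h2 h1
    refine ⟨D * (A + 1) + (-c₂) * (1 / K),
      by nlinarith [mul_pos hD0 (show (0:ℝ) < A + 1 by linarith),
        mul_pos (neg_pos.mpr hc₂neg) (one_div_pos.mpr hK)], ?_⟩
    intro ε hε M
    rw [if_neg hc.ne, if_pos hc]
    obtain ⟨hε1, hlog⟩ := hεf ε hε
    rcases Nat.eq_zero_or_pos M with rfl | hM
    · simp
    have hM0 : (0:ℝ) < M := by exact_mod_cast hM
    have hM1 : (1:ℝ) ≤ M := by exact_mod_cast hM
    have hMsq : (M:ℝ) ≤ (M:ℝ) ^ 2 := by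
      calc (M:ℝ) = M * 1 := (mul_one _).symm
        _ ≤ M * M := by gcongr
        _ = (M:ℝ) ^ 2 := (sq (M:ℝ)).symm
    set X := Real.exp (2 * (r - α) * Λ ε) with hX
    set Y := Real.exp ((r - 2 * α) * Λ ε) with hY
    set Z := Real.exp (-α * Λ ε) with hZ
    clear_value X Y Z
    have hXb : X ≤ A := by
      rw [hX, key ε hε.1 (2 * (r - α))]
      have hexp : (0:ℝ) ≤ -(2 * (r - α) / α) := by
        have : 2 * (r - α) / α ≤ 0 :=
          div_nonpos_of_nonpos_of_nonneg (by linarith) hα.le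
        linarith
      have := Real.rpow_le_one hε.1.le hε1 hexp
      nlinarith [hA0]
    have hZeq : Z = K⁻¹ * ε := by
      rw [hZ, key ε hε.1 (-α), show -α / α = (-1:ℝ) by field_simp]
      norm_num [Real.rpow_neg_one, Real.rpow_one]
    have hZb : Z ≤ 1 / K := by
      rw [hZeq]
      have : K⁻¹ * ε ≤ K⁻¹ * 1 := by
        apply mul_le_mul_of_nonneg_left hε1 (by positivity)
      simpa [one_div] using this
    have hZ0 : 0 ≤ Z := hZ ▸ (Real.exp_pos _).le
    have hY0 : 0 ≤ Y := hY ▸ (Real.exp_pos _).le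
    have h1 : c_disc ^ 2 / (M:ℝ) ^ 2 * c₁ ^ 2 * (1 / (r - α) ^ 2) * (X + 1)
        ≤ D * (A + 1) / (M:ℝ) ^ 2 := by
      rw [div_mul_eq_mul_div, div_mul_eq_mul_div, div_mul_eq_mul_div]
      apply (div_le_div_iff_of_pos_right (by positivity)).mpr
      rw [hD]
      gcongr
    have h2 : c_disc / (M:ℝ) * (2 * c₁ ^ 2 / α) * (1 / (r - α)) * (Y - Z)
        ≤ (-c₂) * (1 / K) / (M:ℝ) := by
      rw [div_mul_eq_mul_div, div_mul_eq_mul_div, div_mul_eq_mul_div]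
      apply (div_le_div_iff_of_pos_right hM0).mpr
      have hnum : c₂ * (Y - Z) ≤ (-c₂) * (1 / K) := by
        have ha := mul_le_mul_of_nonneg_left hZb (neg_nonneg.mpr hc₂neg.le)
        have hb := mul_nonpos_of_nonpos_of_nonneg hc₂neg.le hY0
        nlinarith [ha, hb]
      calc c_disc * (2 * c₁ ^ 2 / α) * (1 / (r - α)) * (Y - Z)
          = c₂ * (Y - Z) := by rw [hc₂]
        _ ≤ (-c₂) * (1 / K) := hnum
    have h3 : D * (A + 1) / (M:ℝ) ^ 2 ≤ D * (A + 1) / (M:ℝ) :=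
      div_le_div_of_nonneg_left (by nlinarith [mul_pos hD0 hA0]) hM0 hMsq
    have hRHS : (D * (A + 1) + (-c₂) * (1 / K)) * (1 / (M:ℝ)) * 1
        = D * (A + 1) / (M:ℝ) + (-c₂) * (1 / K) / (M:ℝ) := by ring
    linarith
  · -- Case r = α
    subst hc
    obtain ⟨s, hs⟩ : ∃ s : ℝ, s = Real.log K := ⟨_, rfl⟩
    obtain ⟨cL, hcL⟩ : ∃ cL : ℝ, cL = (|s| + 1) / r := ⟨_, rfl⟩
    have hcL0 : 0 < cL := by
      rw [hcL]
      positivity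
    refine ⟨c_disc ^ 2 * c₁ ^ 2 * cL ^ 2 + c_disc * (2 * c₁ ^ 2 / r) * (1 / r),
      by nlinarith [mul_pos (mul_pos (pow_pos hcd 2) (pow_pos hc₁ 2)) (pow_pos hcL0 2),
        mul_pos (mul_pos hcd (show (0:ℝ) < 2 * c₁ ^ 2 / r by positivity))
          (show (0:ℝ) < 1 / r by positivity)], ?_⟩
    intro ε hε M
    rw [if_pos rfl, if_neg (lt_irrefl r), if_pos rfl]
    obtain ⟨hε1, hlog⟩ := hεf ε hε
    rcases Nat.eq_zero_or_pos M with rfl | hM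
    · simp
    have hM0 : (0:ℝ) < M := by exact_mod_cast hM
    have hM1 : (1:ℝ) ≤ M := by exact_mod_cast hM
    have hMsq : (M:ℝ) ≤ (M:ℝ) ^ 2 := by
      calc (M:ℝ) = M * 1 := (mul_one _).symm
        _ ≤ M * M := by gcongr
        _ = (M:ℝ) ^ 2 := (sq (M:ℝ)).symm
    set t := Real.log ε with ht
    clear_value t
    -- bound on Λ ε squared
    have hLeq : Λ ε = (s - t) / r := by
      rw [hΛ, show Real.sqrt 2 * c₁ / (r * ε) = K / ε by rw [hKdef, div_div],
        Real.log_div hK.ne' hε.1.ne', ← hs, ← ht]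
      ring
    have hf1 : 0 ≤ -|s| * t - s := by
      nlinarith [le_abs_self s, abs_nonneg s,
        mul_nonneg (abs_nonneg s) (show (0:ℝ) ≤ -t - 1 by linarith)]
    have hf2 : 0 ≤ -|s| * t + s - 2 * t := by
      nlinarith [neg_abs_le s, abs_nonneg s,
        mul_nonneg (abs_nonneg s) (show (0:ℝ) ≤ -t - 1 by linarith)]
    have hbase : (s - t) ^ 2 ≤ (|s| + 1) ^ 2 * t ^ 2 := by
      nlinarith [mul_nonneg hf1 hf2]
    have hL2 : (Λ ε) ^ 2 ≤ cL ^ 2 * t ^ 2 := by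
      rw [hLeq, hcL, div_pow, div_pow, div_mul_eq_mul_div]
      exact (div_le_div_iff_of_pos_right (by positivity)).mpr hbase
    -- bound on Λ ε * exp(-r Λ ε)
    have hLe : Λ ε * Real.exp (-r * Λ ε) ≤ 1 / r := by
      rw [le_div_iff₀ hr]
      have hprod : Real.exp (-r * Λ ε) * Real.exp (r * Λ ε) = 1 := by
        rw [← Real.exp_add, show -r * Λ ε + r * Λ ε = 0 by ring, Real.exp_zero]
      nlinarith [Real.add_one_le_exp (r * Λ ε), Real.exp_pos (-r * Λ ε),
        Real.exp_pos (r * Λ ε)]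
    have h1 : c_disc ^ 2 / (M:ℝ) ^ 2 * c₁ ^ 2 * (Λ ε) ^ 2
        ≤ c_disc ^ 2 * c₁ ^ 2 * cL ^ 2 * t ^ 2 / (M:ℝ) ^ 2 := by
      rw [div_mul_eq_mul_div, div_mul_eq_mul_div]
      apply (div_le_div_iff_of_pos_right (by positivity)).mpr
      nlinarith [mul_le_mul_of_nonneg_left hL2
        (show (0:ℝ) ≤ c_disc ^ 2 * c₁ ^ 2 by positivity)]
    have h2 : c_disc / (M:ℝ) * (2 * c₁ ^ 2 / r) * Λ ε * Real.exp (-r * Λ ε)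
        ≤ c_disc * (2 * c₁ ^ 2 / r) * (1 / r) / (M:ℝ) := by
      rw [div_mul_eq_mul_div, div_mul_eq_mul_div, div_mul_eq_mul_div]
      apply (div_le_div_iff_of_pos_right hM0).mpr
      have h3 : c_disc * (2 * c₁ ^ 2 / r) * Λ ε * Real.exp (-r * Λ ε)
          = (c_disc * (2 * c₁ ^ 2 / r)) * (Λ ε * Real.exp (-r * Λ ε)) := by ring
      rw [h3]
      have hpos : (0:ℝ) < c_disc * (2 * c₁ ^ 2 / r) := by positivity
      calc (c_disc * (2 * c₁ ^ 2 / r)) * (Λ ε * Real.exp (-r * Λ ε))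
          ≤ (c_disc * (2 * c₁ ^ 2 / r)) * (1 / r) :=
            mul_le_mul_of_nonneg_left hLe hpos.le
        _ = c_disc * (2 * c₁ ^ 2 / r) * (1 / r) := by ring
    obtain ⟨C, hC⟩ : ∃ C : ℝ, C = c_disc ^ 2 * c₁ ^ 2 * cL ^ 2 + c_disc * (2 * c₁ ^ 2 / r) * (1 / r) := ⟨_, rfl⟩
    have hRHS : C * (1 / (M:ℝ)) * (t ^ 2 / (M:ℝ) + 1)
        = C * t ^ 2 / (M:ℝ) ^ 2 + C / (M:ℝ) := by ring
    rw [← hC]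
    have h4 : c_disc ^ 2 * c₁ ^ 2 * cL ^ 2 * t ^ 2 / (M:ℝ) ^ 2
        ≤ C * t ^ 2 / (M:ℝ) ^ 2 := by
      apply (div_le_div_iff_of_pos_right (by positivity)).mpr
      have h0 : (0:ℝ) ≤ c_disc * (2 * c₁ ^ 2 / r) * (1 / r) := by positivity
      have hCD : (0:ℝ) ≤ C - c_disc ^ 2 * c₁ ^ 2 * cL ^ 2 := by linarith [hC.ge]
      linarith [mul_nonneg hCD (sq_nonneg t)]
    have h5 : c_disc * (2 * c₁ ^ 2 / r) * (1 / r) / (M:ℝ) ≤ C / (M:ℝ) := by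
      apply (div_le_div_iff_of_pos_right hM0).mpr
      have : (0:ℝ) ≤ c_disc ^ 2 * c₁ ^ 2 * cL ^ 2 := by positivity
      linarith
    linarith
  · -- Case α < r
    have hne : ¬ r = α := hc.ne'
    have hnlt : ¬ r < α := not_lt.mpr hc.le
    have hrα : (0:ℝ) < r - α := by linarith
    obtain ⟨A, hA⟩ : ∃ A : ℝ, A = K ^ (2 * (r - α) / α) := ⟨_, rfl⟩
    have hA0 : 0 < A := hA ▸ Real.rpow_pos_of_pos hK _
    obtain ⟨K₃, hK₃⟩ : ∃ K₃ : ℝ, K₃ = K ^ ((r - 2 * α) / α) := ⟨_, rfl⟩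
    have hK₃0 : 0 < K₃ := hK₃ ▸ Real.rpow_pos_of_pos hK _
    obtain ⟨D, hD⟩ : ∃ D : ℝ, D = c_disc ^ 2 * c₁ ^ 2 * (1 / (r - α) ^ 2) := ⟨_, rfl⟩
    have hsq : (0:ℝ) < (r - α) ^ 2 := by positivity
    have hD0 : 0 < D := by
      rw [hD]
      exact mul_pos (by positivity) (one_div_pos.mpr hsq)
    obtain ⟨c₂, hc₂⟩ : ∃ c₂ : ℝ, c₂ = c_disc * (2 * c₁ ^ 2 / α) * (1 / (r - α)) := ⟨_, rfl⟩
    have hc₂pos : 0 < c₂ := by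
      rw [hc₂]
      have h1 : 0 < 1 / (r - α) := one_div_pos.mpr hrα
      positivity
    refine ⟨D * A + D + c₂ * K₃,
      by nlinarith [mul_pos hD0 hA0, mul_pos hc₂pos hK₃0], ?_⟩
    intro ε hε M
    rw [if_neg hne, if_neg hnlt, if_neg hne]
    obtain ⟨hε1, hlog⟩ := hεf ε hε
    rcases Nat.eq_zero_or_pos M with rfl | hM
    · rcases le_or_gt r (2 * α) with h2α | h2α
      · rw [if_pos h2α]; simp
      · rw [if_neg (not_le.mpr h2α)]; simp
    have hM0 : (0:ℝ) < M := by exact_mod_cast hM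
    have hM1 : (1:ℝ) ≤ M := by exact_mod_cast hM
    have hMsq : (M:ℝ) ≤ (M:ℝ) ^ 2 := by
      calc (M:ℝ) = M * 1 := (mul_one _).symm
        _ ≤ M * M := by gcongr
        _ = (M:ℝ) ^ 2 := (sq (M:ℝ)).symm
    set X := Real.exp (2 * (r - α) * Λ ε) with hX
    set Y := Real.exp ((r - 2 * α) * Λ ε) with hY
    set Z := Real.exp (-α * Λ ε) with hZ
    clear_value X Y Z
    have hZ0 : 0 ≤ Z := hZ ▸ (Real.exp_pos _).le
    have hXeq : X = A * ε ^ (-(2 * (r - α) / α)) := by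
      rw [hX, key ε hε.1 (2 * (r - α)), hA]
    have hYeq : Y = K₃ * ε ^ (-((r - 2 * α) / α)) := by
      rw [hY, key ε hε.1 (r - 2 * α), hK₃]
    rcases le_or_gt r (2 * α) with h2α | h2α
    · -- α < r ≤ 2α
      rw [if_pos h2α]
      have hεexp : ε ^ (-(2 * (r - α) / α)) ≤ ε ^ (-2 : ℝ) := by
        apply Real.rpow_le_rpow_of_exponent_ge hε.1 hε1
        have : 2 * (r - α) / α ≤ 2 := by rw [div_le_iff₀ hα]; linarith
        linarith
      have hXb : X ≤ A * ε ^ (-2 : ℝ) := by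
        rw [hXeq]
        exact mul_le_mul_of_nonneg_left hεexp hA0.le
      have hYb : Y ≤ K₃ := by
        rw [hYeq]
        have hexp : (0:ℝ) ≤ -((r - 2 * α) / α) := by
          have : (r - 2 * α) / α ≤ 0 :=
            div_nonpos_of_nonpos_of_nonneg (by linarith) hα.le
          linarith
        have := Real.rpow_le_one hε.1.le hε1 hexp
        nlinarith [hK₃0]
      have h1 : c_disc ^ 2 / (M:ℝ) ^ 2 * c₁ ^ 2 * (1 / (r - α) ^ 2) * (X + 1)
          ≤ D * (A * ε ^ (-2:ℝ) + 1) / (M:ℝ) ^ 2 := by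
        rw [div_mul_eq_mul_div, div_mul_eq_mul_div, div_mul_eq_mul_div]
        apply (div_le_div_iff_of_pos_right (by positivity)).mpr
        rw [hD]
        gcongr
      have h2 : c_disc / (M:ℝ) * (2 * c₁ ^ 2 / α) * (1 / (r - α)) * (Y - Z)
          ≤ c₂ * K₃ / (M:ℝ) := by
        rw [div_mul_eq_mul_div, div_mul_eq_mul_div, div_mul_eq_mul_div]
        apply (div_le_div_iff_of_pos_right hM0).mpr
        have : c_disc * (2 * c₁ ^ 2 / α) * (1 / (r - α)) * (Y - Z) = c₂ * (Y - Z) := by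
          rw [hc₂]
        rw [this]
        linarith [mul_nonneg hc₂pos.le (sub_nonneg.mpr hYb), mul_nonneg hc₂pos.le hZ0]
      have hone : (1:ℝ) ≤ ε ^ (-2:ℝ) :=
        Real.one_le_rpow_of_pos_of_le_one_of_nonpos hε.1 hε1 (by norm_num)
      have hsplit : D * (A * ε ^ (-2:ℝ) + 1) / (M:ℝ) ^ 2
          = D * A * ε ^ (-2:ℝ) / (M:ℝ) ^ 2 + D / (M:ℝ) ^ 2 := by ring
      have h3 : D / (M:ℝ) ^ 2 ≤ D / (M:ℝ) :=
        div_le_div_of_nonneg_left hD0.le hM0 hMsq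
      obtain ⟨C, hC⟩ : ∃ C : ℝ, C = D * A + D + c₂ * K₃ := ⟨_, rfl⟩
      rw [← hC]
      have hRHS : C * (1 / (M:ℝ)) * (ε ^ (-2:ℝ) / (M:ℝ) + 1)
          = C * ε ^ (-2:ℝ) / (M:ℝ) ^ 2 + C / (M:ℝ) := by ring
      have h4 : D * A * ε ^ (-2:ℝ) / (M:ℝ) ^ 2 ≤ C * ε ^ (-2:ℝ) / (M:ℝ) ^ 2 := by
        apply (div_le_div_iff_of_pos_right (by positivity)).mpr
        have hεp : (0:ℝ) ≤ ε ^ (-2:ℝ) := by positivity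
        have hCD : (0:ℝ) ≤ C - D * A := by
          linarith [mul_pos hc₂pos hK₃0, hD0, hC.ge]
        linarith [mul_nonneg hCD hεp]
      have h5 : D / (M:ℝ) + c₂ * K₃ / (M:ℝ) ≤ C / (M:ℝ) := by
        rw [← add_div]
        apply (div_le_div_iff_of_pos_right hM0).mpr
        linarith [mul_pos hD0 hA0, hC.ge]
      linarith
    · -- r > 2α
      rw [if_neg (not_le.mpr h2α)]
      set T := ε ^ (-(r - 2 * α) / α) with hT
      have hT0 : 0 < T := Real.rpow_pos_of_pos hε.1 _
      have hT1 : 1 ≤ T := by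
        apply Real.one_le_rpow_of_pos_of_le_one_of_nonpos hε.1 hε1
        exact div_nonpos_of_nonpos_of_nonneg (by linarith) hα.le
      clear_value T
      have hTeq : ε ^ (-((r - 2 * α) / α)) = T := by
        rw [hT, neg_div]
      have hXeq2 : X = A * (ε ^ (-r / α) * T) := by
        rw [hXeq, ← hTeq, ← Real.rpow_add hε.1,
          show -r / α + -((r - 2 * α) / α) = -(2 * (r - α) / α) by ring]
      have hYeq2 : Y = K₃ * T := by rw [hYeq, hTeq]
      have hεr0 : (0:ℝ) ≤ ε ^ (-r / α) := (Real.rpow_pos_of_pos hε.1 _).le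
      have h1 : c_disc ^ 2 / (M:ℝ) ^ 2 * c₁ ^ 2 * (1 / (r - α) ^ 2) * (X + 1)
          ≤ D * (A * (ε ^ (-r / α) * T) + T) / (M:ℝ) ^ 2 := by
        rw [div_mul_eq_mul_div, div_mul_eq_mul_div, div_mul_eq_mul_div]
        apply (div_le_div_iff_of_pos_right (by positivity)).mpr
        rw [hD, hXeq2]
        have : A * (ε ^ (-r / α) * T) + 1 ≤ A * (ε ^ (-r / α) * T) + T := by linarith
        gcongr
      have h2 : c_disc / (M:ℝ) * (2 * c₁ ^ 2 / α) * (1 / (r - α)) * (Y - Z)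
          ≤ c₂ * K₃ * T / (M:ℝ) := by
        rw [div_mul_eq_mul_div, div_mul_eq_mul_div, div_mul_eq_mul_div]
        apply (div_le_div_iff_of_pos_right hM0).mpr
        have heq : c_disc * (2 * c₁ ^ 2 / α) * (1 / (r - α)) * (Y - Z) = c₂ * (Y - Z) := by
          rw [hc₂]
        rw [heq, hYeq2]
        linarith [mul_nonneg hc₂pos.le hZ0]
      obtain ⟨C, hC⟩ : ∃ C : ℝ, C = D * A + D + c₂ * K₃ := ⟨_, rfl⟩
      rw [← hC]
      have hRHS : C * (1 / (M:ℝ)) * ((ε ^ (-r / α) / (M:ℝ) + 1) * T)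
          = C * (ε ^ (-r / α) * T) / (M:ℝ) ^ 2 + C * T / (M:ℝ) := by ring
      have hsplit : D * (A * (ε ^ (-r / α) * T) + T) / (M:ℝ) ^ 2
          = D * A * (ε ^ (-r / α) * T) / (M:ℝ) ^ 2 + D * T / (M:ℝ) ^ 2 := by ring
      have h3 : D * T / (M:ℝ) ^ 2 ≤ D * T / (M:ℝ) :=
        div_le_div_of_nonneg_left (mul_pos hD0 hT0).le hM0 hMsq
      have h4 : D * A * (ε ^ (-r / α) * T) / (M:ℝ) ^ 2
          ≤ C * (ε ^ (-r / α) * T) / (M:ℝ) ^ 2 := by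
        apply (div_le_div_iff_of_pos_right (by positivity)).mpr
        have hp : (0:ℝ) ≤ ε ^ (-r / α) * T := mul_nonneg hεr0 hT0.le
        have hCD : (0:ℝ) ≤ C - D * A := by
          linarith [mul_pos hc₂pos hK₃0, hD0, hC.ge]
        linarith [mul_nonneg hCD hp]
      have h5 : D * T / (M:ℝ) + c₂ * K₃ * T / (M:ℝ) ≤ C * T / (M:ℝ) := by
        rw [← add_div]
        apply (div_le_div_iff_of_pos_right hM0).mpr
        have hCT : C * T = D * A * T + D * T + c₂ * K₃ * T := by rw [hC]; ring
        linarith [mul_nonneg (mul_pos hD0 hA0).le hT0.le]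
      linarith
end

section
/- Let r > 0, γ > 0, c₃ > 0, c_disc > 0, M ∈ ℕ and L_max > 0. Let φ : [0, L_max] → ℝ be a nonnegative measurable function with φ(ℓ) ≤ c₃·e^{γℓ} for all ℓ, and let L^(1),…,L^(M) be nonnegative reals satisfying sup_{ℓ > 0} |(1/M)∑_{k=1}^M 1_{ℓ ≤ L^(k)} − e^{−rℓ}| ≤ c_disc/M. Then the total cost ∑_{k=1}^M ∫_0^{L_max} 1_{[0,L^(k)]}(ℓ)·φ(ℓ) dℓ ≤ c₃·c_disc·(1/γ)·(e^{γ·L_max} − 1) + c₃·M·G(L_max), where G(L_max) := (e^{(γ−r)·L_max} − 1)/(γ−r) if r ≠ γ and G(L_max) := L_max if r = γ. -/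
open Set MeasureTheory

lemma aux_int_exp (c L : ℝ) :
    ∫ x in (0:ℝ)..L, Real.exp (c * x) = if c = 0 then L else (Real.exp (c * L) - 1) / c := by
  by_cases hc : c = 0
  · simp [hc]
  · rw [if_neg hc, intervalIntegral.integral_comp_mul_left (fun x => Real.exp x) hc]
    simp [integral_exp, Real.exp_zero, smul_eq_mul, mul_comm, div_eq_inv_mul]

set_option maxHeartbeats 1000000 in
/-- cost estimate in the proof of Theorem 4.2. If the nonnegative
measurable cost rate `φ` satisfies `φ(ℓ) ≤ c₃·e^(γℓ)` on `[0, L_max]` and the nonnegative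
levels `L⁽¹⁾, …, L⁽ᴹ⁾` satisfy the exponential tail discrepancy bound `c_disc/M`, then the
total cost satisfies
`∑ₖ ∫_0^{L_max} 1_{[0,L⁽ᵏ⁾]}(ℓ)·φ(ℓ) dℓ
  ≤ c₃·c_disc·(1/γ)·(e^(γ·L_max) − 1) + c₃·M·G(L_max)`,
where `G(L_max) = (e^((γ−r)·L_max) − 1)/(γ−r)` if `r ≠ γ` and `G(L_max) = L_max` if
`r = γ`. -/
theorem stmt_15 (r γ c₃ c_disc : ℝ) (M : ℕ) (Lmax : ℝ)
    (hr : 0 < r) (hγ : 0 < γ) (hc₃ : 0 < c₃) (hcd : 0 < c_disc) (hLmax : 0 < Lmax)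
    (φ : ℝ → ℝ) (hφ_meas : AEMeasurable φ (volume.restrict (Icc 0 Lmax)))
    (hφ0 : ∀ ℓ ∈ Icc (0 : ℝ) Lmax, 0 ≤ φ ℓ)
    (hφ : ∀ ℓ ∈ Icc (0 : ℝ) Lmax, φ ℓ ≤ c₃ * Real.exp (γ * ℓ))
    (L : Fin M → ℝ) (hL0 : ∀ k, 0 ≤ L k)
    (hdisc : ∀ ℓ > (0 : ℝ),
      |(1 / (M : ℝ)) * ∑ k, (if ℓ ≤ L k then (1 : ℝ) else 0) - Real.exp (-r * ℓ)|
        ≤ c_disc / M) :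
    ∑ k, ∫ ℓ in (0 : ℝ)..Lmax, (if ℓ ≤ L k then (1 : ℝ) else 0) * φ ℓ
      ≤ c₃ * c_disc * (1 / γ) * (Real.exp (γ * Lmax) - 1)
        + c₃ * M *
            (if r = γ then Lmax
             else (Real.exp ((γ - r) * Lmax) - 1) / (γ - r)) := by
  -- M > 0
  have hM : 0 < M := by
    rcases Nat.eq_zero_or_pos M with h | h
    · exfalso
      have := hdisc 1 one_pos
      simp [h, Finset.sum_empty] at this
      linarith [Real.exp_pos (-r)]
    · exact h
  have hMR : (0:ℝ) < (M:ℝ) := by exact_mod_cast hM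
  -- integrability of each summand
  have hint : ∀ k : Fin M, IntervalIntegrable
      (fun ℓ => (if ℓ ≤ L k then (1:ℝ) else 0) * φ ℓ) volume 0 Lmax := by
    intro k
    rw [intervalIntegrable_iff_integrableOn_Icc_of_le hLmax.le]
    have hm : AEMeasurable (fun ℓ => (if ℓ ≤ L k then (1:ℝ) else 0) * φ ℓ)
        (volume.restrict (Icc 0 Lmax)) :=
      ((Measurable.ite measurableSet_Iic measurable_const
        measurable_const).aemeasurable).mul hφ_meas
    refine Integrable.mono' (g := fun _ => c₃ * Real.exp (γ * Lmax))
      (integrable_const _) hm.aestronglyMeasurable ?_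
    · filter_upwards [ae_restrict_mem measurableSet_Icc] with x hx
      have h1 := hφ0 x hx
      have h2 := hφ x hx
      have h3 : Real.exp (γ * x) ≤ Real.exp (γ * Lmax) := by
        apply Real.exp_le_exp.2
        exact mul_le_mul_of_nonneg_left hx.2 hγ.le
      rw [Real.norm_eq_abs, abs_mul]
      by_cases hxk : x ≤ L k <;> simp [hxk, abs_of_nonneg h1] <;>
        [skip; positivity]
      calc φ x ≤ c₃ * Real.exp (γ * x) := h2
        _ ≤ c₃ * Real.exp (γ * Lmax) := by nlinarith
  -- the majorant
  set g : ℝ → ℝ := fun ℓ => ((M:ℝ) * Real.exp (-r * ℓ) + c_disc) * (c₃ * Real.exp (γ * ℓ))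
    with hg
  have hgint : IntervalIntegrable g volume 0 Lmax := by
    exact (((continuous_const.mul ((continuous_const.mul continuous_id).rexp)).add
      continuous_const).mul
      (continuous_const.mul ((continuous_const.mul continuous_id).rexp))).intervalIntegrable _ _
  -- sum of integrals = integral of sum, then compare
  have hsum : ∑ k, ∫ ℓ in (0:ℝ)..Lmax, (if ℓ ≤ L k then (1:ℝ) else 0) * φ ℓ
      = ∫ ℓ in (0:ℝ)..Lmax, ∑ k, (if ℓ ≤ L k then (1:ℝ) else 0) * φ ℓ :=
    (intervalIntegral.integral_finset_sum (fun k _ => hint k)).symm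
  have hptwise : ∀ ℓ ∈ Icc (0:ℝ) Lmax,
      (∑ k, (if ℓ ≤ L k then (1:ℝ) else 0) * φ ℓ) ≤ g ℓ := by
    intro ℓ hℓ
    have hφℓ := hφ0 ℓ hℓ
    have hφℓ' := hφ ℓ hℓ
    have hS : (∑ k, (if ℓ ≤ L k then (1:ℝ) else 0)) ≤ (M:ℝ) * Real.exp (-r * ℓ) + c_disc := by
      rcases eq_or_lt_of_le hℓ.1 with h0 | h0
      · have : (∑ k, (if ℓ ≤ L k then (1:ℝ) else 0)) = M := by
          rw [Finset.sum_congr rfl (fun k _ => if_pos (by rw [← h0]; exact hL0 k))]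
          simp
        rw [this, ← h0]
        simp
        nlinarith
      · have h := hdisc ℓ h0
        have h2 := (abs_le.1 h).2
        have : (1 / (M:ℝ)) * ∑ k, (if ℓ ≤ L k then (1:ℝ) else 0)
            ≤ Real.exp (-r * ℓ) + c_disc / M := by linarith
        calc (∑ k, (if ℓ ≤ L k then (1:ℝ) else 0))
            = (M:ℝ) * ((1 / (M:ℝ)) * ∑ k, (if ℓ ≤ L k then (1:ℝ) else 0)) := by
              field_simp
          _ ≤ (M:ℝ) * (Real.exp (-r * ℓ) + c_disc / M) := by
              exact mul_le_mul_of_nonneg_left this hMR.le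
          _ = (M:ℝ) * Real.exp (-r * ℓ) + c_disc := by field_simp
    have hSnn : (0:ℝ) ≤ ∑ k, (if ℓ ≤ L k then (1:ℝ) else 0) :=
      Finset.sum_nonneg (fun k _ => by positivity)
    calc (∑ k, (if ℓ ≤ L k then (1:ℝ) else 0) * φ ℓ)
        = (∑ k, (if ℓ ≤ L k then (1:ℝ) else 0)) * φ ℓ := by
          rw [Finset.sum_mul]
      _ ≤ (∑ k, (if ℓ ≤ L k then (1:ℝ) else 0)) * (c₃ * Real.exp (γ * ℓ)) :=
          mul_le_mul_of_nonneg_left hφℓ' hSnn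
      _ ≤ g ℓ := by
          apply mul_le_mul_of_nonneg_right hS
          positivity
  have hintsum : IntervalIntegrable
      (fun ℓ => ∑ k, (if ℓ ≤ L k then (1:ℝ) else 0) * φ ℓ) volume 0 Lmax := by
    have h := IntervalIntegrable.sum
      (f := fun (k : Fin M) (ℓ : ℝ) => (if ℓ ≤ L k then (1:ℝ) else 0) * φ ℓ)
      Finset.univ (fun k _ => hint k)
    convert h using 1
    · rfl
    ext ℓ
    simp [Finset.sum_apply]
  have hmono : (∫ ℓ in (0:ℝ)..Lmax, ∑ k, (if ℓ ≤ L k then (1:ℝ) else 0) * φ ℓ)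
      ≤ ∫ ℓ in (0:ℝ)..Lmax, g ℓ :=
    intervalIntegral.integral_mono_on hLmax.le hintsum hgint hptwise
  -- compute ∫ g
  have hgval : (∫ ℓ in (0:ℝ)..Lmax, g ℓ)
      = c₃ * c_disc * (1 / γ) * (Real.exp (γ * Lmax) - 1)
        + c₃ * M * (if r = γ then Lmax
             else (Real.exp ((γ - r) * Lmax) - 1) / (γ - r)) := by
    have hgeq : ∀ ℓ : ℝ, g ℓ
        = (c₃ * M) * Real.exp ((γ - r) * ℓ) + (c₃ * c_disc) * Real.exp (γ * ℓ) := by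
      intro ℓ
      rw [hg]
      have : Real.exp (-r * ℓ) * Real.exp (γ * ℓ) = Real.exp ((γ - r) * ℓ) := by
        rw [← Real.exp_add]; ring_nf
      linear_combination (c₃ * (M:ℝ)) * this
    rw [intervalIntegral.integral_congr (g := fun ℓ =>
        (c₃ * M) * Real.exp ((γ - r) * ℓ) + (c₃ * c_disc) * Real.exp (γ * ℓ))
        (fun ℓ _ => hgeq ℓ)]
    have h1 : IntervalIntegrable (fun ℓ => (c₃ * (M:ℝ)) * Real.exp ((γ - r) * ℓ))
        volume 0 Lmax :=
      (continuous_const.mul ((continuous_const.mul continuous_id).rexp)).intervalIntegrable _ _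
    have h2 : IntervalIntegrable (fun ℓ => (c₃ * c_disc) * Real.exp (γ * ℓ))
        volume 0 Lmax :=
      (continuous_const.mul ((continuous_const.mul continuous_id).rexp)).intervalIntegrable _ _
    rw [intervalIntegral.integral_add h1 h2, intervalIntegral.integral_const_mul,
      intervalIntegral.integral_const_mul, aux_int_exp, aux_int_exp, if_neg hγ.ne']
    have hiff : (γ - r = 0) ↔ (r = γ) := by constructor <;> intro h <;> linarith
    by_cases hrg : r = γ
    · rw [if_pos (by linarith : γ - r = 0), if_pos hrg]
      field_simp
      ring
    · rw [if_neg (fun h => hrg (by linarith)), if_neg hrg]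
      field_simp
      ring
  rw [hsum, ← hgval]
  exact hmono
end
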